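/- arXiv:1904.10157 — 7 statements merged into one kernel-verified Lean document; each statement's English description precedes it below -/
import Mathlib

section
/- Let N be a positive integer and M ≥ 2N−1 an integer. For vectors x, y ∈ ℂ^N, if |(F_M x)_n| = |(F_M y)_n| for all n = 0,…,M−1, then ‖∇^n x‖₂ = ‖∇^n y‖₂ for every integer n ≥ 0. -/
open scoped BigOperators
open Finset

/-- Discrete Fourier transform of `x ∈ ℂ^N`. -/
noncomputable def dft {N : ℕ} (x : Fin N → ℂ) (n : Fin N) : ℂ :=
  ∑ k : Fin N, x k * Complex.exp (-2 * Real.pi * Complex.I * ((k : ℕ) : ℂ) * ((n : ℕ) : ℂ) / (N : ℂ))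

/-- Inverse discrete Fourier transform. -/
noncomputable def idft {N : ℕ} (u : Fin N → ℂ) (j : Fin N) : ℂ :=
  (1 / (N : ℂ)) * ∑ n : Fin N, u n * Complex.exp (2 * Real.pi * Complex.I * ((j : ℕ) : ℂ) * ((n : ℕ) : ℂ) / (N : ℂ))

/-- `M`-point oversampled discrete Fourier transform of `x ∈ ℂ^N`. -/
noncomputable def odft {N : ℕ} (M : ℕ) (x : Fin N → ℂ) (n : Fin M) : ℂ :=
  ∑ k : Fin N, x k * Complex.exp (-2 * Real.pi * Complex.I * ((k : ℕ) : ℂ) * ((n : ℕ) : ℂ) / (M : ℂ))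

/-- Periodic autocorrelation of `x ∈ ℂ^N`. -/
noncomputable def autp {N : ℕ} (x : Fin N → ℂ) (j : Fin N) : ℂ :=
  ∑ k : Fin N, x (k + j) * (starRingEnd ℂ) (x k)

/-- Extension of `x ∈ ℂ^N` to `ℤ` by zero. -/
noncomputable def extz {N : ℕ} (x : Fin N → ℂ) (i : ℤ) : ℂ :=
  if h : 0 ≤ i ∧ i < (N : ℤ) then x ⟨i.toNat, by omega⟩ else 0

/-- (Regular) autocorrelation of `x ∈ ℂ^N`, as a function on `ℤ`. -/
noncomputable def aut {N : ℕ} (x : Fin N → ℂ) (j : ℤ) : ℂ :=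
  ∑ k : Fin N, extz x (((k : ℕ) : ℤ) + j) * (starRingEnd ℂ) (extz x ((k : ℕ) : ℤ))

/-- Circular convolution on `ℂ^N`. -/
noncomputable def cconv {N : ℕ} (v x : Fin N → ℂ) (j : Fin N) : ℂ :=
  ∑ k : Fin N, v k * x (j - k)

/-- The ℓ² norm on `ℂ^N`. -/
noncomputable def l2 {N : ℕ} (x : Fin N → ℂ) : ℝ :=
  Real.sqrt (∑ k : Fin N, ‖x k‖ ^ 2)

/-- The circular finite-difference operator. -/
noncomputable def nabla {N : ℕ} [NeZero N] (x : Fin N → ℂ) (k : Fin N) : ℂ :=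
  x (k + 1) - x k

/-- The sup norm on `ℂ^N`. -/
noncomputable def linf {N : ℕ} [NeZero N] (x : Fin N → ℂ) : ℝ :=
  Finset.univ.sup' Finset.univ_nonempty (fun k => ‖x k‖)

/-- The sup norm on `ℝ^N`. -/
noncomputable def linfR {N : ℕ} [NeZero N] (x : Fin N → ℝ) : ℝ :=
  Finset.univ.sup' Finset.univ_nonempty (fun k => |x k|)

/-- Cyclic index shift: `k ↦ (k + s) mod N`. -/
def shiftIdx {N : ℕ} [NeZero N] (k : Fin N) (s : ℕ) : Fin N :=
  ⟨((k : ℕ) + s) % N, Nat.mod_lt _ (Nat.pos_of_ne_zero (NeZero.ne N))⟩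

/-- A window of length `W` with constant value `a`, extended by zero. -/
noncomputable def win (W : ℕ) (a : ℂ) (i : ℤ) : ℂ :=
  if 0 ≤ i ∧ i < (W : ℤ) then a else 0


section Aux
open Complex

noncomputable def corr {N : ℕ} (x : Fin N → ℂ) (d : ℤ) : ℂ :=
  ∑ k : Fin N, ∑ l : Fin N,
    if ((k : ℕ) : ℤ) - ((l : ℕ) : ℤ) = d then x k * (starRingEnd ℂ) (x l) else 0


lemma exp_orth (M : ℕ) (hM : 0 < M) (t : ℤ) (ht : t.natAbs < M) :
    ∑ n : Fin M, Complex.exp (2 * Real.pi * Complex.I * (t : ℂ) * ((n : ℕ) : ℂ) / (M : ℂ)) =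
      if t = 0 then (M : ℂ) else 0 := by
  have hMC : (M : ℂ) ≠ 0 := Nat.cast_ne_zero.mpr hM.ne'
  have hterm : ∀ n : Fin M,
      Complex.exp (2 * Real.pi * Complex.I * (t : ℂ) * ((n : ℕ) : ℂ) / (M : ℂ)) =
        (Complex.exp (2 * Real.pi * Complex.I * (t : ℂ) / (M : ℂ))) ^ (n : ℕ) := by
    intro n
    rw [← Complex.exp_nat_mul]
    ring_nf
  simp only [hterm]
  rw [Fin.sum_univ_eq_sum_range]
  by_cases h0 : t = 0
  · simp [h0]
  · rw [if_neg h0]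
    set ζ := Complex.exp (2 * Real.pi * Complex.I * (t : ℂ) / (M : ℂ)) with hζ
    have h2 : (2 : ℂ) * Real.pi * Complex.I ≠ 0 := by
      simpa [mul_assoc] using Complex.two_pi_I_ne_zero
    have hζ1 : ζ ≠ 1 := by
      intro hone
      rw [hζ, Complex.exp_eq_one_iff] at hone
      obtain ⟨n, hn⟩ := hone
      field_simp at hn
      have htnm : (t : ℂ) = ((n * M : ℤ) : ℂ) := by
        push_cast
        apply mul_left_cancel₀ h2
        rw [hn]; ring
      have : t = n * M := Int.cast_injective htnm
      rcases this with rfl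
      have hn0 : n ≠ 0 := by rintro rfl; simp at h0
      have h1 : (M : ℤ) ≤ |n * M| := by
        rw [abs_mul]
        calc (M:ℤ) = 1 * |(M:ℤ)| := by simp
        _ ≤ |n| * |(M:ℤ)| := by
          apply mul_le_mul_of_nonneg_right _ (abs_nonneg _)
          exact Int.one_le_abs hn0
      have h3 : ((n*(M:ℤ)).natAbs : ℤ) = |n * M| := Int.abs_eq_natAbs _ ▸ rfl
      omega
    rw [geom_sum_eq hζ1]
    have hζM : ζ ^ M = 1 := by
      rw [hζ, ← Complex.exp_nat_mul]
      have : (M : ℂ) * (2 * Real.pi * Complex.I * (t : ℂ) / (M : ℂ)) = (t : ℂ) * (2 * Real.pi * Complex.I) := by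
        field_simp
      rw [this, Complex.exp_int_mul_two_pi_mul_I]
    rw [hζM]
    simp

lemma odft_normsq {N M : ℕ} (x : Fin N → ℂ) (n : Fin M) :
    odft M x n * (starRingEnd ℂ) (odft M x n) =
      ∑ k : Fin N, ∑ l : Fin N, x k * (starRingEnd ℂ) (x l) *
        Complex.exp (2 * Real.pi * Complex.I * (((l:ℕ):ℂ) - ((k:ℕ):ℂ)) * ((n:ℕ):ℂ) / (M:ℂ)) := by
  unfold odft
  rw [map_sum, Finset.sum_mul_sum]
  apply Finset.sum_congr rfl; intro k _
  apply Finset.sum_congr rfl; intro l _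
  rw [map_mul, ← Complex.exp_conj]
  have hc : (starRingEnd ℂ) (-2 * Real.pi * Complex.I * ((l:ℕ):ℂ) * ((n:ℕ):ℂ) / (M:ℂ)) =
      2 * Real.pi * Complex.I * ((l:ℕ):ℂ) * ((n:ℕ):ℂ) / (M:ℂ) := by
    simp [map_div₀, map_mul, Complex.conj_I, map_ofNat]

  rw [hc, mul_mul_mul_comm, ← Complex.exp_add]
  congr 2
  ring

lemma corr_formula {N M : ℕ} (hN : 0 < N) (hM2 : 2 * N - 1 ≤ M) (x : Fin N → ℂ)
    (d : ℤ) (hd : d.natAbs < N) :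
    (M : ℂ) * corr x d =
      ∑ n : Fin M, odft M x n * (starRingEnd ℂ) (odft M x n) *
        Complex.exp (2 * Real.pi * Complex.I * (d : ℂ) * ((n:ℕ):ℂ) / (M:ℂ)) := by
  have hM : 0 < M := by omega
  unfold corr
  rw [Finset.mul_sum]
  simp only [odft_normsq, Finset.sum_mul]
  rw [Finset.sum_comm]
  apply Finset.sum_congr rfl; intro k _
  rw [Finset.mul_sum, Finset.sum_comm]
  apply Finset.sum_congr rfl; intro l _
  have key : ∀ n : Fin M, x k * (starRingEnd ℂ) (x l) *
      Complex.exp (2 * Real.pi * Complex.I * (((l:ℕ):ℂ) - ((k:ℕ):ℂ)) * ((n:ℕ):ℂ) / (M:ℂ)) *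
      Complex.exp (2 * Real.pi * Complex.I * (d:ℂ) * ((n:ℕ):ℂ) / (M:ℂ))
      = x k * (starRingEnd ℂ) (x l) *
        Complex.exp (2 * Real.pi * Complex.I * ((d + (l:ℕ) - (k:ℕ) : ℤ):ℂ) * ((n:ℕ):ℂ) / (M:ℂ)) := by
    intro n
    rw [mul_assoc, ← Complex.exp_add]
    congr 2
    push_cast
    ring
  simp only [key]
  rw [← Finset.mul_sum, exp_orth M hM _ ?hb]
  case hb =>
    have hk := k.isLt; have hl := l.isLt
    omega
  by_cases hkl : ((k:ℕ):ℤ) - ((l:ℕ):ℤ) = d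
  · rw [if_pos hkl, if_pos (by omega)]
    ring
  · rw [if_neg hkl, if_neg (by omega)]
    simp

lemma autp_eq_corr {N : ℕ} [NeZero N] (x : Fin N → ℂ) (j : Fin N) :
    autp x j = corr x ((j : ℕ) : ℤ) + corr x (((j : ℕ) : ℤ) - (N : ℤ)) := by
  unfold autp corr
  rw [← Finset.sum_add_distrib]
  simp_rw [← Finset.sum_add_distrib]
  rw [Finset.sum_comm]
  apply Finset.sum_congr rfl; intro l _
  have hval : ((l + j : Fin N) : ℕ) = if (l : ℕ) + (j : ℕ) < N then (l : ℕ) + (j : ℕ)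
      else (l : ℕ) + (j : ℕ) - N := by
    rw [Fin.val_add]
    split
    · exact Nat.mod_eq_of_lt ‹_›
    · rw [Nat.mod_eq_sub_mod (by omega), Nat.mod_eq_of_lt (by omega)]
  have key := Finset.sum_eq_single (s := (Finset.univ : Finset (Fin N)))
    (f := fun k : Fin N =>
      (if ((k : ℕ) : ℤ) - ((l : ℕ) : ℤ) = ((j : ℕ) : ℤ) then x k * (starRingEnd ℂ) (x l) else 0) +
      (if ((k : ℕ) : ℤ) - ((l : ℕ) : ℤ) = ((j : ℕ) : ℤ) - (N : ℤ) then x k * (starRingEnd ℂ) (x l) else 0))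
    (l + j) ?_ (fun h => absurd (Finset.mem_univ _) h)
  · rw [key]; beta_reduce
    have h1 := l.isLt; have h2 := j.isLt
    split at hval
    · rw [if_pos (by omega), if_neg (by omega), add_zero]
    · rw [if_neg (by omega), if_pos (by omega), zero_add]
  · intro k _ hk
    have hkv : (k : ℕ) ≠ ((l + j : Fin N) : ℕ) := fun hh => hk (Fin.ext hh)
    have h1 := k.isLt; have h2 := l.isLt; have h3 := j.isLt
    beta_reduce
    rw [if_neg (by split at hval <;> omega), if_neg (by split at hval <;> omega)]
    simp

lemma autp_nabla {N : ℕ} [NeZero N] (u : Fin N → ℂ) (j : Fin N) :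
    autp (nabla u) j = 2 * autp u j - autp u (j + 1) - autp u (j - 1) := by
  unfold autp nabla
  simp only [map_sub, sub_mul, mul_sub]
  rw [Finset.sum_sub_distrib, Finset.sum_sub_distrib, Finset.sum_sub_distrib]
  have T1 : ∑ k : Fin N, u (k + j + 1) * (starRingEnd ℂ) (u (k + 1)) =
      ∑ k : Fin N, u (k + j) * (starRingEnd ℂ) (u k) := by
    apply Fintype.sum_equiv (Equiv.addRight (1 : Fin N))
    intro k
    simp only [Equiv.coe_addRight]
    congr 2
    abel
  have T2 : ∑ k : Fin N, u (k + j + 1) * (starRingEnd ℂ) (u k) =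
      ∑ k : Fin N, u (k + (j + 1)) * (starRingEnd ℂ) (u k) := by
    apply Finset.sum_congr rfl; intro k _
    congr 2
    abel
  have T3 : ∑ k : Fin N, u (k + j) * (starRingEnd ℂ) (u (k + 1)) =
      ∑ k : Fin N, u (k + (j - 1)) * (starRingEnd ℂ) (u k) := by
    apply Fintype.sum_equiv (Equiv.addRight (1 : Fin N))
    intro k
    simp only [Equiv.coe_addRight]
    congr 2
    abel
  rw [T1, T2, T3]
  ring

end Aux

/-- for `M ≥ 2N−1`, equal oversampled Fourier magnitudes imply
equal ℓ² norms of all iterated circular finite differences. -/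
theorem same_derivative_norm_oversampling {N M : ℕ} [NeZero N]
    (hM : 2 * N - 1 ≤ M) (x y : Fin N → ℂ)
    (h : ∀ n : Fin M, ‖odft M x n‖ = ‖odft M y n‖) :
    ∀ n : ℕ, l2 (nabla^[n] x) = l2 (nabla^[n] y) := by
  have hN : 0 < N := Nat.pos_of_ne_zero (NeZero.ne N)
  have hMpos : 0 < M := by omega
  have hMne : (M : ℂ) ≠ 0 := Nat.cast_ne_zero.mpr hMpos.ne'
  have hz : ∀ n : Fin M, odft M x n * (starRingEnd ℂ) (odft M x n) =
      odft M y n * (starRingEnd ℂ) (odft M y n) := by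
    intro n
    rw [Complex.mul_conj, Complex.mul_conj, Complex.normSq_eq_norm_sq, Complex.normSq_eq_norm_sq, h n]
  have hcorr : ∀ d : ℤ, corr x d = corr y d := by
    intro d
    by_cases hd : d.natAbs < N
    · apply mul_left_cancel₀ hMne
      rw [corr_formula hN hM x d hd, corr_formula hN hM y d hd]
      exact Finset.sum_congr rfl fun n _ => by rw [hz n]
    · have hzero : ∀ z : Fin N → ℂ, corr z d = 0 := by
        intro z
        apply Finset.sum_eq_zero; intro k _
        apply Finset.sum_eq_zero; intro l _
        have h1 := k.isLt; have h2 := l.isLt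
        rw [if_neg (by omega)]
      rw [hzero x, hzero y]
  have hautp : autp x = autp y := by
    funext j
    rw [autp_eq_corr, autp_eq_corr, hcorr, hcorr]
  have hiter : ∀ n : ℕ, autp (nabla^[n] x) = autp (nabla^[n] y) := by
    intro n
    induction n with
    | zero => simpa using hautp
    | succ n ih =>
      funext j
      rw [Function.iterate_succ_apply', Function.iterate_succ_apply',
        autp_nabla, autp_nabla, ih]
  have key : ∀ u : Fin N → ℂ, ((∑ k : Fin N, ‖u k‖ ^ 2 : ℝ) : ℂ) = autp u 0 := by
    intro u
    unfold autp
    push_cast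
    apply Finset.sum_congr rfl; intro k _
    rw [add_zero, Complex.mul_conj]
    norm_cast
    exact Complex.sq_norm _
  intro n
  unfold l2
  congr 1
  have := (key (nabla^[n] x)).trans ((hiter n) ▸ (key (nabla^[n] y)).symm)
  exact_mod_cast this
end

section
/- Let N be a positive integer, let E ⊆ ℂ be a set of complex numbers, and suppose there is a constant c > 0 such that |z| = c for all z ∈ E. Let x ∈ ℂ^N with x_k ∈ E for all k, and let y ∈ ℂ^N with y_k ∈ conv(E) for all k, where conv(E) denotes the convex hull of E in ℂ ≅ ℝ². If |(F x)_n| = |(F y)_n| for all n = 0,…,N−1, then y_k ∈ E for all k. -/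
open scoped BigOperators
open Finset

lemma orth (N : ℕ) [NeZero N] (k l : Fin N) :
    ∑ n : Fin N, Complex.exp (2 * Real.pi * Complex.I * (((l:ℕ):ℂ) - ((k:ℕ):ℂ)) / N) ^ (n:ℕ)
      = if k = l then (N:ℂ) else 0 := by
  set ζ : ℂ := Complex.exp (2 * Real.pi * Complex.I * (((l:ℕ):ℂ) - ((k:ℕ):ℂ)) / N) with hζ
  by_cases hkl : k = l
  · subst hkl
    simp [hζ]
  · rw [if_neg hkl]
    have hN : (N:ℂ) ≠ 0 := Nat.cast_ne_zero.mpr (NeZero.ne N)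
    have hζN : ζ ^ N = 1 := by
      rw [hζ, ← Complex.exp_nat_mul]
      have : (N:ℂ) * (2 * Real.pi * Complex.I * (((l:ℕ):ℂ) - ((k:ℕ):ℂ)) / N)
          = (((l:ℕ):ℤ) - ((k:ℕ):ℤ) : ℤ) * (2 * Real.pi * Complex.I) := by
        field_simp; push_cast; ring
      rw [this, Complex.exp_int_mul_two_pi_mul_I]
    have hζ1 : ζ ≠ 1 := by
      rw [hζ]
      intro h1
      rw [Complex.exp_eq_one_iff] at h1
      obtain ⟨m, hm⟩ := h1
      have hπ : (2 * (Real.pi:ℂ) * Complex.I) ≠ 0 := by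
        simp [Real.pi_ne_zero, Complex.I_ne_zero]
      have hc : (((l:ℕ):ℂ) - ((k:ℕ):ℂ)) = m * N := by
        have h2 : 2 * (Real.pi:ℂ) * Complex.I * (((l:ℕ):ℂ) - ((k:ℕ):ℂ))
            = 2 * (Real.pi:ℂ) * Complex.I * (m * N) := by
          field_simp at hm
          linear_combination (2 * (Real.pi:ℂ) * Complex.I) * hm
        exact mul_left_cancel₀ hπ h2
      have hz : ((l:ℕ):ℤ) - ((k:ℕ):ℤ) = m * N := by
        exact_mod_cast hc
      have h1 : (l:ℕ) < N := l.isLt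
      have h2 : (k:ℕ) < N := k.isLt
      have hne : (l:ℕ) ≠ (k:ℕ) := fun e => hkl (Fin.ext e.symm)
      rcases lt_trichotomy m 0 with hm0 | hm0 | hm0
      · nlinarith [hz, Int.le_of_lt hm0]
      · rw [hm0, zero_mul] at hz; omega
      · nlinarith [hz, hm0]
    rw [Fin.sum_univ_eq_sum_range (fun n => ζ ^ n), geom_sum_eq hζ1, hζN]
    simp

lemma parseval {N : ℕ} [NeZero N] (x : Fin N → ℂ) :
    ∑ n : Fin N, dft x n * (starRingEnd ℂ) (dft x n)
      = N * ∑ k : Fin N, x k * (starRingEnd ℂ) (x k) := by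
  have hN : (N:ℂ) ≠ 0 := Nat.cast_ne_zero.mpr (NeZero.ne N)
  have expand : ∀ n : Fin N, dft x n * (starRingEnd ℂ) (dft x n)
      = ∑ k : Fin N, ∑ l : Fin N, x k * (starRingEnd ℂ) (x l)
          * Complex.exp (2 * Real.pi * Complex.I * (((l:ℕ):ℂ) - ((k:ℕ):ℂ)) / N) ^ (n:ℕ) := by
    intro n
    rw [dft, map_sum, Finset.sum_mul_sum]
    refine Finset.sum_congr rfl fun k _ => Finset.sum_congr rfl fun l _ => ?_
    have hconj : (starRingEnd ℂ) (Complex.exp (-2 * Real.pi * Complex.I * ((l:ℕ):ℂ) * ((n:ℕ):ℂ) / N))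
        = Complex.exp (2 * Real.pi * Complex.I * ((l:ℕ):ℂ) * ((n:ℕ):ℂ) / N) := by
      rw [← Complex.exp_conj]
      congr 1
      simp [map_div₀, map_mul, map_neg, map_ofNat, Complex.conj_I, Complex.conj_ofReal]
    rw [map_mul, hconj, ← Complex.exp_nat_mul, mul_mul_mul_comm, ← Complex.exp_add]
    congr 2
    field_simp
    ring
  calc ∑ n : Fin N, dft x n * (starRingEnd ℂ) (dft x n)
      = ∑ n : Fin N, ∑ k : Fin N, ∑ l : Fin N, x k * (starRingEnd ℂ) (x l)
          * Complex.exp (2 * Real.pi * Complex.I * (((l:ℕ):ℂ) - ((k:ℕ):ℂ)) / N) ^ (n:ℕ) :=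
        Finset.sum_congr rfl fun n _ => expand n
    _ = ∑ k : Fin N, ∑ l : Fin N, x k * (starRingEnd ℂ) (x l)
          * ∑ n : Fin N, Complex.exp (2 * Real.pi * Complex.I * (((l:ℕ):ℂ) - ((k:ℕ):ℂ)) / N) ^ (n:ℕ) := by
        rw [Finset.sum_comm]
        refine Finset.sum_congr rfl fun k _ => ?_
        rw [Finset.sum_comm]
        exact Finset.sum_congr rfl fun l _ => (Finset.mul_sum _ _ _).symm
    _ = ∑ k : Fin N, ∑ l : Fin N, x k * (starRingEnd ℂ) (x l) * if k = l then (N:ℂ) else 0 := by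
        simp only [orth]
    _ = N * ∑ k : Fin N, x k * (starRingEnd ℂ) (x k) := by
        rw [Finset.mul_sum]
        refine Finset.sum_congr rfl fun k _ => ?_
        simp [mul_ite, Finset.sum_ite_eq]
        ring

lemma parseval_abs {N : ℕ} [NeZero N] (x : Fin N → ℂ) :
    ∑ n : Fin N, ‖dft x n‖ ^ 2 = N * ∑ k : Fin N, ‖x k‖ ^ 2 := by
  have := parseval x
  simp only [Complex.mul_conj] at this
  have hr : ∑ n : Fin N, Complex.normSq (dft x n) = N * ∑ k : Fin N, Complex.normSq (x k) := by
    exact_mod_cast this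
  simpa only [Complex.sq_norm] using hr

/-- relaxing an equimodular constraint set to its convex hull. -/
theorem convex_hull_to_extreme {N : ℕ} [NeZero N] (E : Set ℂ) (c : ℝ)
    (hc : 0 < c) (hE : ∀ z ∈ E, ‖z‖ = c)
    (x y : Fin N → ℂ) (hx : ∀ k, x k ∈ E) (hy : ∀ k, y k ∈ convexHull ℝ E)
    (h : ∀ n : Fin N, ‖dft x n‖ = ‖dft y n‖) :
    ∀ k, y k ∈ E := by
  have hball : convexHull ℝ E ⊆ Metric.closedBall (0:ℂ) c := by
    apply convexHull_min _ (convex_closedBall 0 c)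
    intro z hz
    simp [Metric.mem_closedBall, dist_zero_right, hE z hz]
  have hyle : ∀ k, ‖y k‖ ≤ c := by
    intro k
    have := hball (hy k)
    simpa [Metric.mem_closedBall, dist_zero_right] using this
  -- equal energies
  have hsum : ∑ k : Fin N, ‖y k‖ ^ 2 = ∑ k : Fin N, c ^ 2 := by
    have hNpos : (0:ℝ) < N := by exact_mod_cast Nat.pos_of_ne_zero (NeZero.ne N)
    have h1 := parseval_abs x
    have h2 := parseval_abs y
    have h3 : ∑ n : Fin N, ‖dft x n‖ ^ 2 = ∑ n : Fin N, ‖dft y n‖ ^ 2 :=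
      Finset.sum_congr rfl fun n _ => by rw [h n]
    have h4 : (N:ℝ) * ∑ k : Fin N, ‖x k‖ ^ 2 = (N:ℝ) * ∑ k : Fin N, ‖y k‖ ^ 2 := by
      rw [← h1, ← h2, h3]
    have h5 : ∑ k : Fin N, ‖y k‖ ^ 2 = ∑ k : Fin N, ‖x k‖ ^ 2 :=
      (mul_left_cancel₀ (ne_of_gt hNpos) h4).symm
    rw [h5]
    exact Finset.sum_congr rfl fun k _ => by rw [hE _ (hx k)]
  -- each |y k| = c
  have hyc : ∀ k, ‖y k‖ = c := by
    intro k
    have hle : ∀ i ∈ Finset.univ, ‖y i‖ ^ 2 ≤ c ^ 2 := by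
      intro i _
      exact pow_le_pow_left₀ (norm_nonneg _) (hyle i) 2
    have heq : ‖y k‖ ^ 2 = c ^ 2 :=
      (Finset.sum_eq_sum_iff_of_le hle).mp hsum k (Finset.mem_univ k)
    calc ‖y k‖ = Real.sqrt (‖y k‖ ^ 2) :=
          (Real.sqrt_sq (norm_nonneg _)).symm
      _ = Real.sqrt (c ^ 2) := by rw [heq]
      _ = c := Real.sqrt_sq hc.le
  -- extreme point argument
  intro k
  have hext : y k ∈ (convexHull ℝ E).extremePoints ℝ := by
    refine ⟨hy k, ?_⟩
    intro x₁ hx₁ x₂ hx₂ hseg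
    by_cases h12 : x₁ = x₂
    · subst h12
      rw [openSegment_same] at hseg
      exact hseg.symm
    · exfalso
      obtain ⟨a, b, ha, hb, hab, hsum'⟩ := hseg
      have hn1 : ‖x₁‖ ≤ c := by
        have := hball hx₁; simpa [Metric.mem_closedBall, dist_zero_right] using this
      have hn2 : ‖x₂‖ ≤ c := by
        have := hball hx₂; simpa [Metric.mem_closedBall, dist_zero_right] using this
      have := norm_combo_lt_of_ne hn1 hn2 h12 ha hb hab
      rw [hsum'] at this
      rw [hyc k] at this
      exact lt_irrefl c this
  exact extremePoints_convexHull_subset hext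
end

section
/- Let N be a positive integer, let x ∈ ℝ^N with x_k ∈ {−1, 1} for all k, and let y ∈ ℝ^N with −1 ≤ y_k ≤ 1 for all k. If |(F x)_n| = |(F y)_n| for all n = 0,…,N−1, then y_k ∈ {−1, 1} for all k, and the number of indices k with y_k = 1 equals either the number of indices k with x_k = 1 or the number of indices k with x_k = −1. -/
open scoped BigOperators
open Finset

lemma root_sum {N : ℕ} (hN : 0 < N) (m : ℤ) :
    ∑ n : Fin N, Complex.exp (2 * Real.pi * Complex.I * (m : ℂ) * ((n:ℕ):ℂ) / (N:ℂ)) =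
      if (N:ℤ) ∣ m then (N:ℂ) else 0 := by
  have hNC : (N:ℂ) ≠ 0 := Nat.cast_ne_zero.mpr hN.ne'
  set c : ℂ := Complex.exp (2 * Real.pi * Complex.I * (m : ℂ) / (N:ℂ)) with hc
  have hterm : ∀ n : Fin N,
      Complex.exp (2 * Real.pi * Complex.I * (m : ℂ) * ((n:ℕ):ℂ) / (N:ℂ)) = c ^ (n:ℕ) := by
    intro n
    rw [hc, ← Complex.exp_nat_mul]
    ring_nf
  rw [Finset.sum_congr rfl (fun n _ => hterm n), Fin.sum_univ_eq_sum_range (fun i => c ^ i)]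
  by_cases hdvd : (N:ℤ) ∣ m
  · obtain ⟨t, ht⟩ := hdvd
    have hc1 : c = 1 := by
      rw [hc, ht]
      have : ((N * t : ℤ) : ℂ) * (2 * Real.pi * Complex.I) / (N:ℂ)
          = (t:ℂ) * (2 * Real.pi * Complex.I) := by
        push_cast
        field_simp
      rw [show (2 * Real.pi * Complex.I * ((N * t : ℤ) : ℂ) / (N:ℂ))
          = ((N * t : ℤ) : ℂ) * (2 * Real.pi * Complex.I) / (N:ℂ) by ring, this,
        Complex.exp_int_mul_two_pi_mul_I]
    have hd : (N:ℤ) ∣ m := ⟨t, ht⟩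
    rw [if_pos hd]
    simp [hc1]
  · have hcne : c ≠ 1 := by
      intro h1
      rw [hc, Complex.exp_eq_one_iff] at h1
      obtain ⟨j, hj⟩ := h1
      apply hdvd
      refine ⟨j, ?_⟩
      have hpi : (2 * Real.pi * Complex.I) ≠ 0 := by
        simp [Real.pi_ne_zero, Complex.I_ne_zero]
      have : (m : ℂ) = (N : ℂ) * j := by
        field_simp at hj
        have h2 : (2 * (Real.pi:ℂ) * Complex.I) * (m:ℂ)
            = (2 * (Real.pi:ℂ) * Complex.I) * ((N:ℂ) * j) := by linear_combination (2 * (Real.pi:ℂ) * Complex.I) * hj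
        exact mul_left_cancel₀ hpi h2
      exact_mod_cast this
    rw [geom_sum_eq hcne]
    have hcN : c ^ N = 1 := by
      rw [hc, ← Complex.exp_nat_mul]
      have : (N:ℂ) * (2 * Real.pi * Complex.I * (m : ℂ) / (N:ℂ))
          = (m:ℂ) * (2 * Real.pi * Complex.I) := by field_simp
      rw [this, Complex.exp_int_mul_two_pi_mul_I]
    rw [hcN, if_neg hdvd]
    simp

lemma fin_dvd_iff {N : ℕ} (k l : Fin N) : (N:ℤ) ∣ (((l:ℕ):ℤ) - ((k:ℕ):ℤ)) ↔ l = k := by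
  constructor
  · intro hd
    have h0 : (((l:ℕ):ℤ) - ((k:ℕ):ℤ)) = 0 := by
      refine Int.eq_zero_of_abs_lt_dvd hd ?_
      have h1 := l.isLt; have h2 := k.isLt
      rw [abs_lt]; omega
    have : (l:ℕ) = (k:ℕ) := by omega
    exact Fin.ext this
  · rintro rfl; simp

lemma dft_parseval {N : ℕ} (hN : 0 < N) (x : Fin N → ℂ) :
    ∑ n : Fin N, dft x n * (starRingEnd ℂ) (dft x n)
      = (N:ℂ) * ∑ k : Fin N, x k * (starRingEnd ℂ) (x k) := by
  have key : ∀ n : Fin N, dft x n * (starRingEnd ℂ) (dft x n)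
      = ∑ k : Fin N, ∑ l : Fin N, x k * (starRingEnd ℂ) (x l) *
        Complex.exp (2 * Real.pi * Complex.I * (((((l:ℕ):ℤ) - ((k:ℕ):ℤ)) : ℤ) : ℂ) * ((n:ℕ):ℂ) / (N:ℂ)) := by
    intro n
    unfold dft
    rw [map_sum, Finset.sum_mul_sum]
    refine Finset.sum_congr rfl fun k _ => Finset.sum_congr rfl fun l _ => ?_
    rw [map_mul]
    have hconj : (starRingEnd ℂ) (Complex.exp (-2 * Real.pi * Complex.I * ((l:ℕ):ℂ) * ((n:ℕ):ℂ) / (N:ℂ)))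
        = Complex.exp (2 * Real.pi * Complex.I * ((l:ℕ):ℂ) * ((n:ℕ):ℂ) / (N:ℂ)) := by
      rw [← Complex.exp_conj]
      congr 1
      simp [map_div₀, map_mul, map_neg, Complex.conj_I, map_ofNat]
    rw [hconj]
    rw [show x k * Complex.exp (-2 * Real.pi * Complex.I * ((k:ℕ):ℂ) * ((n:ℕ):ℂ) / (N:ℂ)) *
        ((starRingEnd ℂ) (x l) * Complex.exp (2 * Real.pi * Complex.I * ((l:ℕ):ℂ) * ((n:ℕ):ℂ) / (N:ℂ)))
        = x k * (starRingEnd ℂ) (x l) *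
          (Complex.exp (-2 * Real.pi * Complex.I * ((k:ℕ):ℂ) * ((n:ℕ):ℂ) / (N:ℂ)) *
           Complex.exp (2 * Real.pi * Complex.I * ((l:ℕ):ℂ) * ((n:ℕ):ℂ) / (N:ℂ))) by ring,
      ← Complex.exp_add]
    congr 2
    push_cast
    ring
  rw [Finset.sum_congr rfl (fun n _ => key n), Finset.sum_comm]
  rw [Finset.sum_congr rfl (fun k _ => Finset.sum_comm)]
  have inner : ∀ k l : Fin N,
      ∑ n : Fin N, x k * (starRingEnd ℂ) (x l) *
        Complex.exp (2 * Real.pi * Complex.I * (((((l:ℕ):ℤ) - ((k:ℕ):ℤ)) : ℤ) : ℂ) * ((n:ℕ):ℂ) / (N:ℂ))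
      = x k * (starRingEnd ℂ) (x l) * (if l = k then (N:ℂ) else 0) := by
    intro k l
    rw [← Finset.mul_sum, root_sum hN, if_congr (fin_dvd_iff k l) rfl rfl]
  rw [Finset.sum_congr rfl (fun k _ => Finset.sum_congr rfl (fun l _ => inner k l))]
  rw [Finset.mul_sum]
  refine Finset.sum_congr rfl fun k _ => ?_
  simp [mul_ite, Finset.sum_ite_eq, mul_comm]

open scoped Classical in
/-- box relaxation for `{-1,1}`-valued signals. -/
theorem box_to_pm_one {N : ℕ} [NeZero N] (x y : Fin N → ℝ)
    (hx : ∀ k, x k = -1 ∨ x k = 1) (hy : ∀ k, -1 ≤ y k ∧ y k ≤ 1)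
    (h : ∀ n : Fin N, ‖dft (fun k => (x k : ℂ)) n‖ =
      ‖dft (fun k => (y k : ℂ)) n‖) :
    (∀ k, y k = -1 ∨ y k = 1) ∧
    ((Finset.univ.filter fun k => y k = 1).card =
        (Finset.univ.filter fun k => x k = 1).card ∨
      (Finset.univ.filter fun k => y k = 1).card =
        (Finset.univ.filter fun k => x k = -1).card) := by
  have hN : 0 < N := Nat.pos_of_ne_zero (NeZero.ne N)
  have hNC : (N:ℂ) ≠ 0 := Nat.cast_ne_zero.mpr hN.ne'
  -- Parseval consequence
  have hsum : ∑ n : Fin N, dft (fun k => (x k:ℂ)) n * (starRingEnd ℂ) (dft (fun k => (x k:ℂ)) n)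
      = ∑ n : Fin N, dft (fun k => (y k:ℂ)) n * (starRingEnd ℂ) (dft (fun k => (y k:ℂ)) n) := by
    refine Finset.sum_congr rfl fun n _ => ?_
    rw [Complex.mul_conj, Complex.mul_conj, Complex.normSq_eq_norm_sq, Complex.normSq_eq_norm_sq, h n]
  rw [dft_parseval hN, dft_parseval hN] at hsum
  have hsum2 := mul_left_cancel₀ hNC hsum
  have hxy : (∑ k, (x k)^2) = ∑ k, (y k)^2 := by
    have : ((∑ k, (x k)^2 : ℝ) : ℂ) = ((∑ k, (y k)^2 : ℝ) : ℂ) := by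
      push_cast
      calc (∑ k : Fin N, ((x k:ℂ))^2) = ∑ k : Fin N, (x k:ℂ) * (starRingEnd ℂ) (x k:ℂ) := by
            refine Finset.sum_congr rfl fun k _ => ?_
            rw [Complex.conj_ofReal]; ring
        _ = ∑ k : Fin N, (y k:ℂ) * (starRingEnd ℂ) (y k:ℂ) := hsum2
        _ = ∑ k : Fin N, ((y k:ℂ))^2 := by
            refine Finset.sum_congr rfl fun k _ => ?_
            rw [Complex.conj_ofReal]; ring
    exact_mod_cast this
  have hxsq : ∀ k, (x k)^2 = 1 := by
    intro k; rcases hx k with h1 | h1 <;> rw [h1] <;> norm_num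
  have hysum : (∑ k, (y k)^2) = (N:ℝ) := by
    rw [← hxy, Finset.sum_congr rfl fun k _ => hxsq k]
    simp
  have hysq : ∀ k, (y k)^2 = 1 := by
    have hle : ∀ k ∈ (univ : Finset (Fin N)), (y k)^2 ≤ 1 := by
      intro k _
      have := hy k
      nlinarith [this.1, this.2]
    have heq : (∑ k, (y k)^2) = ∑ k : Fin N, (1:ℝ) := by
      rw [hysum]; simp
    intro k
    exact (Finset.sum_eq_sum_iff_of_le hle).mp heq k (Finset.mem_univ k)
  have hy' : ∀ k, y k = -1 ∨ y k = 1 := by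
    intro k
    have := hysq k
    rw [sq] at this
    rcases mul_self_eq_one_iff.mp this with h1 | h1
    · exact Or.inr h1
    · exact Or.inl h1
  refine ⟨hy', ?_⟩
  -- counts
  have hsplit : ∀ (z : Fin N → ℝ), (∀ k, z k = -1 ∨ z k = 1) →
      (∑ k, z k) = ((univ.filter fun k => z k = 1).card : ℝ)
        - ((univ.filter fun k => ¬ z k = 1).card : ℝ) := by
    intro z hz
    rw [← Finset.sum_filter_add_sum_filter_not univ (fun k => z k = 1) z]
    have h1 : ∑ k ∈ univ.filter (fun k => z k = 1), z k
        = ((univ.filter fun k => z k = 1).card : ℝ) := by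
      rw [Finset.sum_congr rfl (fun k hk => (Finset.mem_filter.mp hk).2), Finset.sum_const,
        nsmul_eq_mul, mul_one]
    have h2 : ∑ k ∈ univ.filter (fun k => ¬ z k = 1), z k
        = -(((univ.filter fun k => ¬ z k = 1).card : ℝ)) := by
      rw [Finset.sum_congr rfl
        (fun k hk => show z k = -1 from (hz k).resolve_right (Finset.mem_filter.mp hk).2),
        Finset.sum_const, nsmul_eq_mul, mul_neg_one]
    rw [h1, h2]; ring
  have hdft0 : ∀ z : Fin N → ℝ, dft (fun k => (z k : ℂ)) 0 = ((∑ k, z k : ℝ) : ℂ) := by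
    intro z
    unfold dft
    push_cast
    refine Finset.sum_congr rfl fun k _ => ?_
    norm_num
  have habs : |∑ k, x k| = |∑ k, y k| := by
    have := h 0
    rw [hdft0, hdft0, Complex.norm_real, Complex.norm_real, Real.norm_eq_abs, Real.norm_eq_abs] at this
    exact this
  set p := (univ.filter fun k => x k = 1).card with hp
  set p' := (univ.filter fun k => ¬ x k = 1).card with hp'
  set q := (univ.filter fun k => y k = 1).card with hq
  set q' := (univ.filter fun k => ¬ y k = 1).card with hq'
  have hpp' : p + p' = N := by
    rw [hp, hp', Finset.card_filter_add_card_filter_not]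
    simp
  have hqq' : q + q' = N := by
    rw [hq, hq', Finset.card_filter_add_card_filter_not]
    simp
  have hpneg : (univ.filter fun k => x k = -1).card = p' := by
    rw [hp']
    congr 1
    apply Finset.filter_congr
    intro k _
    constructor
    · intro h1 h2; rw [h1] at h2; norm_num at h2
    · intro h1; exact (hx k).resolve_right h1
  rw [hpneg]
  have habs2 : |(p:ℝ) - p'| = |(q:ℝ) - q'| := by
    rw [hsplit x hx, hsplit y hy'] at habs
    exact habs
  have hppR : (p:ℝ) + p' = N := by exact_mod_cast hpp'
  have hqqR : (q:ℝ) + q' = N := by exact_mod_cast hqq'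
  rcases abs_eq_abs.mp habs2 with h1 | h1
  · left
    have : (q:ℝ) = p := by linarith
    exact_mod_cast this
  · right
    have : (q:ℝ) = p' := by linarith
    exact_mod_cast this
end

section
/- Let N be a positive integer and M ≥ 2N−1 an integer. Let x ∈ {0,1}^N be a binary vector satisfying x_0 = 1 and the palindromic condition x_n = x_{N−1−n} for all n = 0,…,N−1. If y ∈ {0,1}^N is any binary vector with |(F_M y)_n| = |(F_M x)_n| for all n = 0,…,M−1, then y = x. -/
open scoped BigOperators
open Finset

set_option maxHeartbeats 1000000

noncomputable def ext0 (N : ℕ) (z : Fin N → ℝ) (i : ℕ) : ℝ :=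
  if h : i < N then z ⟨i, h⟩ else 0

noncomputable def acn (N : ℕ) (z : Fin N → ℝ) (j : ℕ) : ℝ :=
  ∑ k ∈ Finset.range (N - j), ext0 N z (k + j) * ext0 N z k

lemma exp_sum_eq (M : ℕ) (hM : 0 < M) (d : ℤ) :
    ∑ n : Fin M, Complex.exp (2 * Real.pi * Complex.I * (d:ℂ) * ((n:ℕ):ℂ) / M) =
      if (M:ℤ) ∣ d then (M:ℂ) else 0 := by
  have hM0 : (M:ℂ) ≠ 0 := Nat.cast_ne_zero.mpr hM.ne'
  have h2 : (2:ℂ) * Real.pi * Complex.I ≠ 0 := by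
    simp [Real.pi_ne_zero, Complex.I_ne_zero]
  set ζ : ℂ := Complex.exp (2 * Real.pi * Complex.I * d / M) with hζdef
  have hterm : ∀ n : Fin M, Complex.exp (2 * Real.pi * Complex.I * (d:ℂ) * ((n:ℕ):ℂ) / M) = ζ ^ (n:ℕ) := by
    intro n
    rw [hζdef, ← Complex.exp_nat_mul]
    congr 1
    ring
  simp only [hterm]
  have hpow : ζ ^ M = 1 := by
    rw [hζdef, ← Complex.exp_nat_mul]
    have harg : (M:ℂ) * (2 * Real.pi * Complex.I * d / M) = d * (2 * Real.pi * Complex.I) := by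
      field_simp
    rw [harg, Complex.exp_int_mul_two_pi_mul_I]
  by_cases hdvd : (M:ℤ) ∣ d
  · obtain ⟨e, he⟩ := hdvd
    have hone : ζ = 1 := by
      rw [hζdef, he]
      have harg : 2 * Real.pi * Complex.I * ((M:ℤ) * e : ℤ) / M = (e:ℤ) * (2 * Real.pi * Complex.I) := by
        push_cast
        field_simp
      rw [harg, Complex.exp_int_mul_two_pi_mul_I]
    rw [if_pos ⟨e, he⟩]
    simp [hone]
  · have hζne : ζ ≠ 1 := by
      intro hone
      rw [hζdef, Complex.exp_eq_one_iff] at hone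
      obtain ⟨n, hn⟩ := hone
      apply hdvd
      refine ⟨n, ?_⟩
      have hd : (d:ℂ) = (M:ℂ) * n := by
        field_simp at hn
        have h3 : 2 * (Real.pi:ℂ) * Complex.I * (d:ℂ) = 2 * (Real.pi:ℂ) * Complex.I * ((M:ℂ) * n) := by
          linear_combination (2 * (Real.pi:ℂ) * Complex.I) * hn
        exact mul_left_cancel₀ h2 h3
      exact_mod_cast hd
    rw [Fin.sum_univ_eq_sum_range, geom_sum_eq hζne, hpow]
    simp [hdvd]

lemma dvd_aux {N M : ℕ} (hMN : 2 * N - 1 ≤ M) {j k l : ℕ} (hj : j < N) (hk : k < N) (hl : l < N)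
    (hdvd : (M:ℤ) ∣ ((j:ℤ) - k + l)) : k = l + j := by
  obtain ⟨c, hc⟩ := hdvd
  have hub : (M:ℤ) * c < M := by rw [← hc]; omega
  have hlb : -(M:ℤ) < M * c := by rw [← hc]; omega
  have hMpos : (0:ℤ) < M := by omega
  have hc0 : c = 0 := by
    by_contra hc0
    rcases lt_or_gt_of_ne hc0 with hlt | hgt
    · have : (M:ℤ) * c ≤ M * (-1) := by
        apply mul_le_mul_of_nonneg_left (by omega) (le_of_lt hMpos)
      linarith
    · have : (M:ℤ) * 1 ≤ M * c := by
        apply mul_le_mul_of_nonneg_left (by omega) (le_of_lt hMpos)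
      linarith
  rw [hc0, mul_zero] at hc
  omega

lemma conj_odft {N : ℕ} (M : ℕ) (z : Fin N → ℝ) (n : Fin M) :
    (starRingEnd ℂ) (odft M (fun k => ((z k : ℝ) : ℂ)) n)
      = ∑ l : Fin N, ((z l : ℝ) : ℂ) * Complex.exp (2 * Real.pi * Complex.I * ((l:ℕ):ℂ) * ((n:ℕ):ℂ) / M) := by
  rw [odft, map_sum]
  refine Finset.sum_congr rfl fun l _ => ?_
  rw [map_mul, Complex.conj_ofReal, ← Complex.exp_conj]
  congr 2
  simp [map_div₀, map_mul, map_neg, Complex.conj_I, Complex.conj_ofReal, map_ofNat]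

lemma spectral (N M : ℕ) (hN : 0 < N) (hMN : 2 * N - 1 ≤ M) (z : Fin N → ℝ) (j : ℕ) (hj : j < N) :
    ∑ n : Fin M, odft M (fun k => ((z k : ℝ) : ℂ)) n * (starRingEnd ℂ) (odft M (fun k => ((z k : ℝ) : ℂ)) n)
        * Complex.exp (2 * Real.pi * Complex.I * ((j:ℕ):ℂ) * ((n:ℕ):ℂ) / M)
      = (M:ℂ) * ((acn N z j : ℝ) : ℂ) := by
  have hMpos : 0 < M := by omega
  have key : ∀ n : Fin M,
      odft M (fun k => ((z k : ℝ) : ℂ)) n * (starRingEnd ℂ) (odft M (fun k => ((z k : ℝ) : ℂ)) n)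
        * Complex.exp (2 * Real.pi * Complex.I * ((j:ℕ):ℂ) * ((n:ℕ):ℂ) / M)
      = ∑ k : Fin N, ∑ l : Fin N, ((z k : ℝ) : ℂ) * ((z l : ℝ) : ℂ) *
          Complex.exp (2 * Real.pi * Complex.I * ((((j:ℤ) - (k:ℕ) + (l:ℕ)) : ℤ) : ℂ) * ((n:ℕ):ℂ) / M) := by
    intro n
    rw [conj_odft, odft, Finset.sum_mul_sum, Finset.sum_mul]
    refine Finset.sum_congr rfl fun k _ => ?_
    rw [Finset.sum_mul]
    refine Finset.sum_congr rfl fun l _ => ?_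
    have hE : Complex.exp (-2 * Real.pi * Complex.I * ((k:ℕ):ℂ) * ((n:ℕ):ℂ) / M)
        * Complex.exp (2 * Real.pi * Complex.I * ((l:ℕ):ℂ) * ((n:ℕ):ℂ) / M)
        * Complex.exp (2 * Real.pi * Complex.I * ((j:ℕ):ℂ) * ((n:ℕ):ℂ) / M)
        = Complex.exp (2 * Real.pi * Complex.I * ((((j:ℤ) - (k:ℕ) + (l:ℕ)) : ℤ) : ℂ) * ((n:ℕ):ℂ) / M) := by
      rw [← Complex.exp_add, ← Complex.exp_add]
      congr 1
      push_cast
      ring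
    linear_combination ((z k : ℝ) : ℂ) * ((z l : ℝ) : ℂ) * hE
  calc ∑ n : Fin M, odft M (fun k => ((z k : ℝ) : ℂ)) n * (starRingEnd ℂ) (odft M (fun k => ((z k : ℝ) : ℂ)) n)
        * Complex.exp (2 * Real.pi * Complex.I * ((j:ℕ):ℂ) * ((n:ℕ):ℂ) / M)
      = ∑ n : Fin M, ∑ k : Fin N, ∑ l : Fin N, ((z k : ℝ) : ℂ) * ((z l : ℝ) : ℂ) *
          Complex.exp (2 * Real.pi * Complex.I * ((((j:ℤ) - (k:ℕ) + (l:ℕ)) : ℤ) : ℂ) * ((n:ℕ):ℂ) / M) :=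
        Finset.sum_congr rfl fun n _ => key n
    _ = ∑ k : Fin N, ∑ l : Fin N, ∑ n : Fin M, ((z k : ℝ) : ℂ) * ((z l : ℝ) : ℂ) *
          Complex.exp (2 * Real.pi * Complex.I * ((((j:ℤ) - (k:ℕ) + (l:ℕ)) : ℤ) : ℂ) * ((n:ℕ):ℂ) / M) := by
        rw [Finset.sum_comm]
        exact Finset.sum_congr rfl fun k _ => Finset.sum_comm
    _ = ∑ k : Fin N, ∑ l : Fin N, ((z k : ℝ) : ℂ) * ((z l : ℝ) : ℂ) *
          (if (M:ℤ) ∣ ((j:ℤ) - (k:ℕ) + (l:ℕ)) then (M:ℂ) else 0) := by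
        refine Finset.sum_congr rfl fun k _ => Finset.sum_congr rfl fun l _ => ?_
        rw [← Finset.mul_sum, exp_sum_eq M hMpos]
    _ = ∑ l : Fin N, (if h : (l:ℕ) + j < N then (M:ℂ) * ((z ⟨(l:ℕ) + j, h⟩ : ℝ) : ℂ) * ((z l : ℝ) : ℂ) else 0) := by
        rw [Finset.sum_comm]
        refine Finset.sum_congr rfl fun l _ => ?_
        by_cases hlj : (l:ℕ) + j < N
        · rw [dif_pos hlj, Finset.sum_eq_single (⟨(l:ℕ) + j, hlj⟩ : Fin N)]
          · rw [if_pos]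
            · push_cast
              ring
            · exact ⟨0, by push_cast; ring⟩
          · intro k _ hk
            rw [if_neg, mul_zero]
            intro hdvd
            exact hk (Fin.ext (dvd_aux hMN hj k.isLt l.isLt hdvd))
          · simp
        · rw [dif_neg hlj, Finset.sum_eq_zero]
          intro k _
          rw [if_neg, mul_zero]
          intro hdvd
          have := dvd_aux hMN hj k.isLt l.isLt hdvd
          omega
    _ = (M:ℂ) * ((acn N z j : ℝ) : ℂ) := by
        have hRHS : ((acn N z j : ℝ) : ℂ)
            = ∑ k ∈ Finset.range (N - j), ((ext0 N z (k + j) : ℝ) : ℂ) * ((ext0 N z k : ℝ) : ℂ) := by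
          rw [acn]
          push_cast
          rfl
        rw [hRHS, Finset.mul_sum]
        have hL : ∀ l : Fin N,
            (if h : (l:ℕ) + j < N then (M:ℂ) * ((z ⟨(l:ℕ) + j, h⟩ : ℝ) : ℂ) * ((z l : ℝ) : ℂ) else 0)
            = (fun i => if h : i + j < N then (M:ℂ) * ((ext0 N z (i + j) : ℝ) : ℂ) * ((ext0 N z i : ℝ) : ℂ) else 0) ((l:ℕ)) := by
          intro l
          by_cases h : (l:ℕ) + j < N
          · simp only [dif_pos h]
            simp [ext0, h, l.isLt]
          · simp only [dif_neg h]
        calc ∑ l : Fin N, (if h : (l:ℕ) + j < N then (M:ℂ) * ((z ⟨(l:ℕ) + j, h⟩ : ℝ) : ℂ) * ((z l : ℝ) : ℂ) else 0)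
            = ∑ l ∈ Finset.range N, (fun i => if h : i + j < N then (M:ℂ) * ((ext0 N z (i + j) : ℝ) : ℂ) * ((ext0 N z i : ℝ) : ℂ) else 0) l := by
              rw [← Fin.sum_univ_eq_sum_range]
              exact Finset.sum_congr rfl fun l _ => hL l
          _ = ∑ l ∈ Finset.range (N - j), (fun i => if h : i + j < N then (M:ℂ) * ((ext0 N z (i + j) : ℝ) : ℂ) * ((ext0 N z i : ℝ) : ℂ) else 0) l := by
              refine (Finset.sum_subset (Finset.range_subset_range.2 (Nat.sub_le N j)) ?_).symm
              intro i hi hni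
              simp only [Finset.mem_range] at hi hni
              simp [show ¬(i + j < N) by omega]
          _ = ∑ i ∈ Finset.range (N - j), (M:ℂ) * (((ext0 N z (i + j) : ℝ) : ℂ) * ((ext0 N z i : ℝ) : ℂ)) := by
              refine Finset.sum_congr rfl fun i hi => ?_
              simp only [Finset.mem_range] at hi
              simp [show i + j < N by omega]
              ring

/-- palindromic binary signals are uniquely recoverable from
`M ≥ 2N−1` oversampled Fourier magnitudes. -/
theorem palindromic_uniqueness {N M : ℕ} [NeZero N] (hM : 2 * N - 1 ≤ M)
    (x y : Fin N → ℝ) (hx : ∀ k, x k = 0 ∨ x k = 1)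
    (hx0 : x ⟨0, Nat.pos_of_ne_zero (NeZero.ne N)⟩ = 1)
    (hpal : ∀ n : Fin N, x n = x ⟨N - 1 - (n : ℕ), by omega⟩)
    (hy : ∀ k, y k = 0 ∨ y k = 1)
    (h : ∀ n : Fin M, ‖odft M (fun k => (y k : ℂ)) n‖ =
      ‖odft M (fun k => (x k : ℂ)) n‖) :
    y = x := by
  have hN : 0 < N := Nat.pos_of_ne_zero (NeZero.ne N)
  have hMpos : 0 < M := by omega
  -- autocorrelations agree
  have hac : ∀ j, j < N → acn N y j = acn N x j := by
    intro j hj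
    have hM0 : (M:ℂ) ≠ 0 := Nat.cast_ne_zero.mpr hMpos.ne'
    have hsX := spectral N M hN hM x j hj
    have hsY := spectral N M hN hM y j hj
    have hprod : ∀ n : Fin M,
        odft M (fun k => ((y k : ℝ) : ℂ)) n * (starRingEnd ℂ) (odft M (fun k => ((y k : ℝ) : ℂ)) n)
        = odft M (fun k => ((x k : ℝ) : ℂ)) n * (starRingEnd ℂ) (odft M (fun k => ((x k : ℝ) : ℂ)) n) := by
      intro n
      rw [Complex.mul_conj, Complex.mul_conj, ← Complex.sq_norm, ← Complex.sq_norm, h n]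
    have hsum : ∑ n : Fin M, odft M (fun k => ((y k : ℝ) : ℂ)) n * (starRingEnd ℂ) (odft M (fun k => ((y k : ℝ) : ℂ)) n)
          * Complex.exp (2 * Real.pi * Complex.I * ((j:ℕ):ℂ) * ((n:ℕ):ℂ) / M)
        = ∑ n : Fin M, odft M (fun k => ((x k : ℝ) : ℂ)) n * (starRingEnd ℂ) (odft M (fun k => ((x k : ℝ) : ℂ)) n)
          * Complex.exp (2 * Real.pi * Complex.I * ((j:ℕ):ℂ) * ((n:ℕ):ℂ) / M) :=
      Finset.sum_congr rfl fun n _ => by rw [hprod n]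
    have hMC : (M:ℂ) * ((acn N y j : ℝ) : ℂ) = (M:ℂ) * ((acn N x j : ℝ) : ℂ) := by
      rw [← hsY, ← hsX, hsum]
    have := mul_left_cancel₀ hM0 hMC
    exact_mod_cast this
  -- basic facts about ext0
  have hx' : ∀ i, ext0 N x i = 0 ∨ ext0 N x i = 1 := by
    intro i; unfold ext0; split
    · exact hx _
    · exact Or.inl rfl
  have hy' : ∀ i, ext0 N y i = 0 ∨ ext0 N y i = 1 := by
    intro i; unfold ext0; split
    · exact hy _
    · exact Or.inl rfl
  have hpal' : ∀ i, i < N → ext0 N x (N - 1 - i) = ext0 N x i := by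
    intro i hi
    have h2 : N - 1 - i < N := by omega
    simp only [ext0, dif_pos hi, dif_pos h2]
    exact (hpal ⟨i, hi⟩).symm
  have hx'0 : ext0 N x 0 = 1 := by
    simp only [ext0, dif_pos hN]; exact hx0
  have hx'N1 : ext0 N x (N - 1) = 1 := by
    have := hpal' 0 hN
    simp only [Nat.sub_zero] at this
    rw [this, hx'0]
  -- base: y' 0 = 1 and y' (N-1) = 1
  have hbY : ext0 N y 0 = 1 ∧ ext0 N y (N - 1) = 1 := by
    have hb := hac (N - 1) (by omega)
    have hr : N - (N - 1) = 1 := by omega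
    simp only [acn, hr, Finset.sum_range_one, Nat.zero_add] at hb
    rw [hx'N1, hx'0, mul_one] at hb
    rcases hy' 0 with h1 | h1 <;> rcases hy' (N - 1) with h2 | h2 <;>
      rw [h1, h2] at hb <;> norm_num at hb <;> exact ⟨h1, h2⟩
  -- main induction
  have key : ∀ m, 2 * m ≤ N - 1 →
      ext0 N y m = ext0 N x m ∧ ext0 N y (N - 1 - m) = ext0 N x (N - 1 - m) := by
    intro m
    induction m using Nat.strong_induction_on with
    | _ m ih =>
      intro hm
      rcases Nat.eq_zero_or_pos m with rfl | hm1
      · simp only [Nat.sub_zero]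
        rw [hbY.1, hbY.2, hx'0, hx'N1]
        exact ⟨rfl, rfl⟩
      · obtain ⟨m', rfl⟩ : ∃ m', m = m' + 1 := ⟨m - 1, by omega⟩
        have hb := hac (N - 1 - (m' + 1)) (by omega)
        have hr : N - (N - 1 - (m' + 1)) = m' + 1 + 1 := by omega
        simp only [acn, hr] at hb
        have i1 : m' + 1 + (N - 1 - (m' + 1)) = N - 1 := by omega
        have hdec : ∀ z : Fin N → ℝ,
            ∑ k ∈ Finset.range (m' + 1 + 1), ext0 N z (k + (N - 1 - (m' + 1))) * ext0 N z k
            = (∑ k ∈ Finset.range m', ext0 N z (k + 1 + (N - 1 - (m' + 1))) * ext0 N z (k + 1))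
              + ext0 N z (N - 1 - (m' + 1)) * ext0 N z 0 + ext0 N z (N - 1) * ext0 N z (m' + 1) := by
          intro z
          rw [Finset.sum_range_succ, Finset.sum_range_succ']
          simp only [Nat.zero_add, i1]
        rw [hdec, hdec] at hb
        have hmid : ∑ k ∈ Finset.range m', ext0 N y (k + 1 + (N - 1 - (m' + 1))) * ext0 N y (k + 1)
            = ∑ k ∈ Finset.range m', ext0 N x (k + 1 + (N - 1 - (m' + 1))) * ext0 N x (k + 1) := by
          refine Finset.sum_congr rfl fun k hk => ?_
          have hk' := Finset.mem_range.1 hk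
          have e1 : ext0 N y (k + 1) = ext0 N x (k + 1) := (ih (k + 1) (by omega) (by omega)).1
          have e2 : k + 1 + (N - 1 - (m' + 1)) = N - 1 - (m' + 1 - (k + 1)) := by omega
          have e3 : ext0 N y (k + 1 + (N - 1 - (m' + 1))) = ext0 N x (k + 1 + (N - 1 - (m' + 1))) := by
            rw [e2]
            exact (ih (m' + 1 - (k + 1)) (by omega) (by omega)).2
          rw [e1, e3]
        rw [hmid, hx'N1, hbY.2, hx'0, hbY.1, mul_one, one_mul, one_mul] at hb
        have heq : ext0 N y (N - 1 - (m' + 1)) + ext0 N y (m' + 1)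
            = ext0 N x (N - 1 - (m' + 1)) + ext0 N x (m' + 1) := by linarith
        have hpm : ext0 N x (N - 1 - (m' + 1)) = ext0 N x (m' + 1) := hpal' (m' + 1) (by omega)
        clear hb hmid hdec hac h hpal hx0 hpal' ih
        rcases hy' (m' + 1) with h1 | h1 <;> rcases hy' (N - 1 - (m' + 1)) with h2 | h2 <;>
          rcases hx' (m' + 1) with h3 | h3 <;> constructor <;> linarith
  -- conclude
  have hall : ∀ i, i < N → ext0 N y i = ext0 N x i := by
    intro i hi
    by_cases h2 : 2 * i ≤ N - 1
    · exact (key i h2).1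
    · have hm : 2 * (N - 1 - i) ≤ N - 1 := by omega
      have := (key (N - 1 - i) hm).2
      rwa [show N - 1 - (N - 1 - i) = i by omega] at this
  funext k
  have := hall k k.isLt
  simpa [ext0, k.isLt] using this
end

section
/- Let N be a positive integer and let x ∈ {0,1}^N be a binary vector with x_0 = x_{N−1} = 1 whose Z-transform P_x(z) = ∑_{k=0}^{N−1} x_k z^k is reciprocal, i.e. x_k = x_{N−1−k} for all k (equivalently P_x equals its reverse polynomial z^{N−1} P_x(1/z)). Then any binary vector y ∈ {0,1}^N with Aut(y) = Aut(x) satisfies y = x. -/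
open scoped BigOperators
open Finset

/-- Real version of `extz`. -/
noncomputable def extzR' {N : ℕ} (x : Fin N → ℝ) (i : ℤ) : ℝ :=
  if h : 0 ≤ i ∧ i < (N : ℤ) then x ⟨i.toNat, by omega⟩ else 0

lemma extz_ofReal' {N : ℕ} (x : Fin N → ℝ) (i : ℤ) :
    extz (fun k => (x k : ℂ)) i = ((extzR' x i : ℝ) : ℂ) := by
  unfold extz extzR'
  split <;> simp

lemma aut_ofReal' {N : ℕ} (x : Fin N → ℝ) (j : ℤ) :
    aut (fun k => (x k : ℂ)) j =
      ((∑ k : Fin N, extzR' x (((k : ℕ) : ℤ) + j) * extzR' x ((k : ℕ) : ℤ) : ℝ) : ℂ) := by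
  unfold aut
  rw [Complex.ofReal_sum]
  refine Finset.sum_congr rfl fun k _ => ?_
  rw [extz_ofReal', extz_ofReal', Complex.conj_ofReal]
  push_cast
  ring

lemma extzR'_fin {N : ℕ} (x : Fin N → ℝ) (k : Fin N) :
    extzR' x ((k : ℕ) : ℤ) = x k := by
  have hk := k.isLt
  rw [extzR', dif_pos (by constructor <;> omega)]
  congr 1

lemma extzR'_shift {N : ℕ} (x : Fin N → ℝ) (m : ℕ) (hm : m < N) (k : Fin N) :
    extzR' x (((k : ℕ) : ℤ) + ((N - 1 - m : ℕ) : ℤ)) =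
      if h : (k : ℕ) ≤ m then x ⟨(k : ℕ) + (N - 1 - m), by have := k.isLt; omega⟩ else 0 := by
  have hk := k.isLt
  unfold extzR'
  by_cases h : (k : ℕ) ≤ m
  · rw [dif_pos (by omega), dif_pos h]
    congr 1
  · rw [dif_neg (by omega), dif_neg h]

/-- Correlation sum at lag `N - 1 - m`. -/
noncomputable def Sm' {N : ℕ} (x : Fin N → ℝ) (m : ℕ) (hm : m < N) : ℝ :=
  ∑ k : Fin N,
    (if h : (k : ℕ) ≤ m then x ⟨(k : ℕ) + (N - 1 - m), by have := k.isLt; omega⟩ else 0) * x k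

lemma Sm'_eq_aut {N : ℕ} (x : Fin N → ℝ) (m : ℕ) (hm : m < N) :
    aut (fun k => (x k : ℂ)) ((N - 1 - m : ℕ) : ℤ) = ((Sm' x m hm : ℝ) : ℂ) := by
  rw [aut_ofReal']
  congr 1
  unfold Sm'
  refine Finset.sum_congr rfl fun k _ => ?_
  rw [extzR'_fin, extzR'_shift x m hm]
/-- a binary signal with reciprocal Z-transform is uniquely
determined by its (regular) autocorrelation among binary signals. -/
theorem reciprocal_aut_uniqueness {N : ℕ} [NeZero N] (x y : Fin N → ℝ)
    (hx : ∀ k, x k = 0 ∨ x k = 1)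
    (hx0 : x ⟨0, Nat.pos_of_ne_zero (NeZero.ne N)⟩ = 1)
    (hxl : x ⟨N - 1, by have := Nat.pos_of_ne_zero (NeZero.ne N); omega⟩ = 1)
    (hrec : ∀ k : Fin N, x k = x ⟨N - 1 - (k : ℕ), by omega⟩)
    (hy : ∀ k, y k = 0 ∨ y k = 1)
    (haut : ∀ j : ℤ, aut (fun k => (y k : ℂ)) j = aut (fun k => (x k : ℂ)) j) :
    y = x := by
  have hN : 0 < N := Nat.pos_of_ne_zero (NeZero.ne N)
  -- equality of correlation sums
  have hS : ∀ (m : ℕ) (hm : m < N), Sm' y m hm = Sm' x m hm := by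
    intro m hm
    apply Complex.ofReal_injective
    rw [← Sm'_eq_aut y m hm, ← Sm'_eq_aut x m hm, haut]
  have key : ∀ m, ∀ hm : m < N,
      y ⟨m, hm⟩ = x ⟨m, hm⟩ ∧ y ⟨N - 1 - m, by omega⟩ = x ⟨N - 1 - m, by omega⟩ := by
    intro m
    induction m using Nat.strong_induction_on with
    | _ m IH =>
      intro hm
      have hSm := hS m hm
      rcases Nat.eq_zero_or_pos m with rfl | hm1
      · -- base case m = 0
        have base : ∀ z : Fin N → ℝ,
            Sm' z 0 hN = z ⟨N - 1 - 0, by omega⟩ * z ⟨0, hN⟩ := by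
          intro z
          unfold Sm'
          rw [Finset.sum_eq_single (⟨0, hN⟩ : Fin N)]
          · have i0 : (⟨((⟨0, hN⟩ : Fin N) : ℕ) + (N - 1 - 0),
                by have : ((⟨0, hN⟩ : Fin N) : ℕ) = 0 := rfl; omega⟩ : Fin N)
                = ⟨N - 1 - 0, by omega⟩ :=
              Fin.ext (show (0 : ℕ) + (N - 1 - 0) = N - 1 - 0 by omega)
            rw [dif_pos (Nat.zero_le 0), i0]
          · intro b _ hb
            rw [dif_neg fun hle => hb (Fin.ext (show (b : ℕ) = 0 by omega)), zero_mul]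
          · simp
        rw [base y, base x] at hSm
        have e1 : x ⟨N - 1 - 0, by omega⟩ = 1 := hxl
        have e2 : x ⟨0, hN⟩ = 1 := hx0
        rw [e1, e2, one_mul] at hSm
        -- hSm : y ⟨N-1-0⟩ * y ⟨0⟩ = 1
        have hy0 : y ⟨0, hN⟩ = 1 := by
          rcases hy ⟨0, hN⟩ with h | h
          · rw [h, mul_zero] at hSm; norm_num at hSm
          · exact h
        have hyl : y ⟨N - 1 - 0, by omega⟩ = 1 := by
          rw [hy0, mul_one] at hSm; exact hSm
        exact ⟨hy0.trans e2.symm, hyl.trans e1.symm⟩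
      · -- inductive step, m ≥ 1
        have hne : (⟨m, hm⟩ : Fin N) ≠ ⟨0, hN⟩ := Fin.ne_of_val_ne (by omega : m ≠ 0)
        have peel : ∀ z : Fin N → ℝ,
            Sm' z m hm = z ⟨N - 1 - m, by omega⟩ * z ⟨0, hN⟩
              + z ⟨N - 1, by omega⟩ * z ⟨m, hm⟩
              + ∑ k ∈ (Finset.univ.erase (⟨0, hN⟩ : Fin N)).erase (⟨m, hm⟩ : Fin N),
                  (if h : (k : ℕ) ≤ m then
                    z ⟨(k : ℕ) + (N - 1 - m), by have := k.isLt; omega⟩ else 0) * z k := by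
          intro z
          unfold Sm'
          rw [← Finset.add_sum_erase _ _ (Finset.mem_univ (⟨0, hN⟩ : Fin N)),
              ← Finset.add_sum_erase _ _
                (Finset.mem_erase.mpr ⟨hne, Finset.mem_univ (⟨m, hm⟩ : Fin N)⟩)]
          rw [dif_pos (Nat.zero_le m), dif_pos (le_refl m)]
          have i1 : (⟨((⟨0, hN⟩ : Fin N) : ℕ) + (N - 1 - m),
              by have : ((⟨0, hN⟩ : Fin N) : ℕ) = 0 := rfl; omega⟩ : Fin N)
              = ⟨N - 1 - m, by omega⟩ := by
            apply Fin.ext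
            show (0 : ℕ) + (N - 1 - m) = N - 1 - m
            omega
          have i2 : (⟨((⟨m, hm⟩ : Fin N) : ℕ) + (N - 1 - m),
              by have : ((⟨m, hm⟩ : Fin N) : ℕ) = m := rfl; omega⟩ : Fin N)
              = ⟨N - 1, by omega⟩ := by
            apply Fin.ext
            show m + (N - 1 - m) = N - 1
            omega
          rw [i1, i2]
          ring
        have hmid : ∑ k ∈ (Finset.univ.erase (⟨0, hN⟩ : Fin N)).erase (⟨m, hm⟩ : Fin N),
              (if h : (k : ℕ) ≤ m then
                y ⟨(k : ℕ) + (N - 1 - m), by have := k.isLt; omega⟩ else 0) * y k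
            = ∑ k ∈ (Finset.univ.erase (⟨0, hN⟩ : Fin N)).erase (⟨m, hm⟩ : Fin N),
              (if h : (k : ℕ) ≤ m then
                x ⟨(k : ℕ) + (N - 1 - m), by have := k.isLt; omega⟩ else 0) * x k := by
          refine Finset.sum_congr rfl fun k hk => ?_
          have hk1 : (k : ℕ) ≠ m := fun h =>
            (Finset.mem_erase.mp hk).1 (Fin.ext h)
          have hk0 : (k : ℕ) ≠ 0 := fun h =>
            (Finset.mem_erase.mp (Finset.mem_erase.mp hk).2).1 (Fin.ext h)
          by_cases hle : (k : ℕ) ≤ m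
          · have hklt : (k : ℕ) < m := lt_of_le_of_ne hle hk1
            rw [dif_pos hle, dif_pos hle]
            have e1 : y k = x k := (IH (k : ℕ) hklt k.isLt).1
            have hj : m - (k : ℕ) < m := by omega
            have hkN := k.isLt
            have e2 : y ⟨(k : ℕ) + (N - 1 - m), by omega⟩
                = x ⟨(k : ℕ) + (N - 1 - m), by omega⟩ := by
              have i3 : (⟨(k : ℕ) + (N - 1 - m), by omega⟩ : Fin N)
                  = ⟨N - 1 - (m - (k : ℕ)), by omega⟩ :=
                Fin.ext (show (k : ℕ) + (N - 1 - m) = N - 1 - (m - (k : ℕ)) by omega)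
              rw [i3]
              exact (IH (m - (k : ℕ)) hj (by omega)).2
            rw [e1, e2]
          · rw [dif_neg hle, dif_neg hle, zero_mul, zero_mul]
        rw [peel y, peel x, hmid] at hSm
        have h00 : y ⟨0, hN⟩ = 1 := (IH 0 hm1 hN).1.trans hx0
        have h0l : y ⟨N - 1, by omega⟩ = 1 := (IH 0 hm1 hN).2.trans hxl
        have gx0 : x ⟨0, hN⟩ = 1 := hx0
        have gxl : x ⟨N - 1, by omega⟩ = 1 := hxl
        rw [h00, h0l, gx0, gxl, mul_one, one_mul, mul_one, one_mul] at hSm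
        -- hSm : y⟨N-1-m⟩ + y⟨m⟩ + R = x⟨N-1-m⟩ + x⟨m⟩ + R
        have hx' : x ⟨m, hm⟩ = x ⟨N - 1 - m, by omega⟩ := hrec ⟨m, hm⟩
        rcases hy ⟨m, hm⟩ with ha | ha <;>
          rcases hy ⟨N - 1 - m, by omega⟩ with hb | hb <;>
          rcases hx ⟨m, hm⟩ with hc | hc <;>
          constructor <;> linarith [hSm, hx', ha, hb, hc]
  funext k
  exact (key k.1 k.2).1
end

section
/- Let N be a positive integer and M ≥ N an integer. Let x ∈ {0,1}^N be a binary vector and let y ∈ ℝ^N satisfy 0 ≤ y_k ≤ 1 for all k. If |(F_M x)_n| = |(F_M y)_n| for all n = 0,…,M−1, then y_k ∈ {0,1} for all k and ‖y‖₀ = ‖x‖₀. -/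
open scoped BigOperators
open Finset

lemma sum_exp_ne_zero (M : ℕ) (hM : 0 < M) (d : ℤ) (hd : d ≠ 0) (hlt : d.natAbs < M) :
    ∑ n : Fin M, Complex.exp (2 * Real.pi * Complex.I * d * n / M) = 0 := by
  set z : ℂ := Complex.exp (2 * Real.pi * Complex.I * d / M) with hz
  have hMC : (M : ℂ) ≠ 0 := Nat.cast_ne_zero.mpr hM.ne'
  have hpow : ∀ n : ℕ, Complex.exp (2 * Real.pi * Complex.I * d * n / M) = z ^ n := by
    intro n
    rw [hz, ← Complex.exp_nat_mul]
    congr 1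
    field_simp
  have hz1 : z ≠ 1 := by
    intro hzz
    rw [hz, Complex.exp_eq_one_iff] at hzz
    obtain ⟨m, hm⟩ := hzz
    have h2pi : (2 * (Real.pi : ℂ) * Complex.I : ℂ) ≠ 0 := by
      simp [Real.pi_ne_zero, Complex.I_ne_zero]
    have hdc : (d : ℂ) = (m : ℂ) * M := by
      have h1 : (2 * (Real.pi : ℂ) * Complex.I) * d =
          (2 * (Real.pi : ℂ) * Complex.I) * ((m : ℂ) * M) := by
        field_simp at hm
        linear_combination (2 * (Real.pi : ℂ) * Complex.I) * hm
      exact mul_left_cancel₀ h2pi h1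
    have hdz : d = m * M := by exact_mod_cast hdc
    rcases eq_or_ne m 0 with hm0 | hm0
    · simp [hm0] at hdz; exact hd hdz
    · have h1 : d.natAbs = m.natAbs * M := by
        rw [hdz, Int.natAbs_mul, Int.natAbs_natCast]
      have h2 : 1 ≤ m.natAbs := Int.natAbs_pos.mpr hm0
      nlinarith [hlt, h1, h2]
  have hzM : z ^ M = 1 := by
    rw [hz, ← Complex.exp_nat_mul]
    have : (M : ℂ) * (2 * Real.pi * Complex.I * d / M) = d * (2 * Real.pi * Complex.I) := by
      field_simp
    rw [this, Complex.exp_int_mul_two_pi_mul_I]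
  calc ∑ n : Fin M, Complex.exp (2 * Real.pi * Complex.I * d * n / M)
      = ∑ n ∈ Finset.range M, z ^ n := by
        rw [← Fin.sum_univ_eq_sum_range]
        exact Finset.sum_congr rfl fun n _ => hpow n
    _ = (z ^ M - 1) / (z - 1) := geom_sum_eq hz1 M
    _ = 0 := by rw [hzM]; simp

lemma odft_parseval {N M : ℕ} (hNM : N ≤ M) (hM : 0 < M) (x : Fin N → ℂ) :
    ∑ n : Fin M, odft M x n * (starRingEnd ℂ) (odft M x n)
      = (M : ℂ) * ∑ k : Fin N, x k * (starRingEnd ℂ) (x k) := by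
  have key : ∀ n : Fin M, odft M x n * (starRingEnd ℂ) (odft M x n)
      = ∑ k : Fin N, ∑ l : Fin N, x k * (starRingEnd ℂ) (x l) *
          Complex.exp (2 * Real.pi * Complex.I *
            ((((l : ℕ) : ℤ) - ((k : ℕ) : ℤ) : ℤ) : ℂ) * ((n : ℕ) : ℂ) / (M : ℂ)) := by
    intro n
    rw [odft, map_sum, Finset.sum_mul_sum]
    refine Finset.sum_congr rfl fun k _ => Finset.sum_congr rfl fun l _ => ?_
    rw [map_mul, ← Complex.exp_conj]
    have hc : (starRingEnd ℂ)
        (-2 * (Real.pi : ℂ) * Complex.I * ((l : ℕ) : ℂ) * ((n : ℕ) : ℂ) / (M : ℂ))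
        = 2 * (Real.pi : ℂ) * Complex.I * ((l : ℕ) : ℂ) * ((n : ℕ) : ℂ) / (M : ℂ) := by
      simp only [map_div₀, map_mul, map_neg, map_ofNat, Complex.conj_I, Complex.conj_ofReal,
        map_natCast]
      ring
    rw [hc]
    rw [mul_mul_mul_comm, ← Complex.exp_add]
    congr 1
    push_cast
    ring
  calc ∑ n : Fin M, odft M x n * (starRingEnd ℂ) (odft M x n)
      = ∑ n : Fin M, ∑ k : Fin N, ∑ l : Fin N, x k * (starRingEnd ℂ) (x l) *
          Complex.exp (2 * Real.pi * Complex.I *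
            ((((l : ℕ) : ℤ) - ((k : ℕ) : ℤ) : ℤ) : ℂ) * ((n : ℕ) : ℂ) / (M : ℂ)) :=
        Finset.sum_congr rfl fun n _ => key n
    _ = ∑ k : Fin N, ∑ l : Fin N, x k * (starRingEnd ℂ) (x l) *
          ∑ n : Fin M, Complex.exp (2 * Real.pi * Complex.I *
            ((((l : ℕ) : ℤ) - ((k : ℕ) : ℤ) : ℤ) : ℂ) * ((n : ℕ) : ℂ) / (M : ℂ)) := by
        rw [Finset.sum_comm]
        refine Finset.sum_congr rfl fun k _ => ?_
        rw [Finset.sum_comm]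
        exact Finset.sum_congr rfl fun l _ => (Finset.mul_sum _ _ _).symm
    _ = ∑ k : Fin N, x k * (starRingEnd ℂ) (x k) * (M : ℂ) := by
        refine Finset.sum_congr rfl fun k _ => ?_
        rw [Finset.sum_eq_single k]
        · congr 1
          have : (((k : ℕ) : ℤ) - ((k : ℕ) : ℤ) : ℤ) = 0 := by ring
          rw [this]
          simp
        · intro l _ hlk
          have hd : (((l : ℕ) : ℤ) - ((k : ℕ) : ℤ) : ℤ) ≠ 0 := by
            intro hcon
            apply hlk
            have : (l : ℕ) = (k : ℕ) := by omega
            exact Fin.ext this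
          have hlt : (((l : ℕ) : ℤ) - ((k : ℕ) : ℤ) : ℤ).natAbs < M := by
            have h1 := l.isLt
            have h2 := k.isLt
            omega
          rw [sum_exp_ne_zero M hM _ hd hlt, mul_zero]
        · intro hk
          exact absurd (Finset.mem_univ k) hk
    _ = (M : ℂ) * ∑ k : Fin N, x k * (starRingEnd ℂ) (x k) := by
        rw [Finset.mul_sum]
        exact Finset.sum_congr rfl fun k _ => mul_comm _ _

lemma odft_parsevalR {N M : ℕ} (hNM : N ≤ M) (hM : 0 < M) (x : Fin N → ℂ) :
    ∑ n : Fin M, ‖odft M x n‖ ^ 2 = M * ∑ k : Fin N, ‖x k‖ ^ 2 := by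
  have h := odft_parseval hNM hM x
  simp only [Complex.mul_conj] at h
  have h2 : ((∑ n : Fin M, Complex.normSq (odft M x n) : ℝ) : ℂ)
      = (((M : ℝ) * ∑ k : Fin N, Complex.normSq (x k) : ℝ) : ℂ) := by
    push_cast
    exact h
  have h3 := Complex.ofReal_injective h2
  simpa [Complex.sq_norm] using h3

lemma odft_dc {N M : ℕ} (hM : 0 < M) (x : Fin N → ℂ) :
    odft M x ⟨0, hM⟩ = ∑ k : Fin N, x k := by
  simp [odft]

open scoped Classical in
/-- box relaxation for binary signals with `M ≥ N` oversampled
Fourier magnitudes. -/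
theorem box_to_binary_oversampling {N M : ℕ} [NeZero N] (hM : N ≤ M)
    (x y : Fin N → ℝ) (hx : ∀ k, x k = 0 ∨ x k = 1)
    (hy : ∀ k, 0 ≤ y k ∧ y k ≤ 1)
    (h : ∀ n : Fin M, ‖odft M (fun k => (x k : ℂ)) n‖ =
      ‖odft M (fun k => (y k : ℂ)) n‖) :
    (∀ k, y k = 0 ∨ y k = 1) ∧
    (Finset.univ.filter fun k => y k ≠ 0).card =
      (Finset.univ.filter fun k => x k ≠ 0).card := by
  have hMpos : 0 < M := lt_of_lt_of_le (Nat.pos_of_ne_zero (NeZero.ne N)) hM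
  have hdc := h ⟨0, hMpos⟩
  rw [odft_dc hMpos, odft_dc hMpos] at hdc
  have hxsum : ∑ k, x k = ∑ k, y k := by
    have h1 : ‖((∑ k, x k : ℝ) : ℂ)‖ = ‖((∑ k, y k : ℝ) : ℂ)‖ := by
      push_cast
      exact hdc
    rw [Complex.norm_real, Complex.norm_real, Real.norm_eq_abs, Real.norm_eq_abs] at h1
    have hx0 : 0 ≤ ∑ k, x k := Finset.sum_nonneg fun k _ => by rcases hx k with h' | h' <;> simp [h']
    have hy0 : 0 ≤ ∑ k, y k := Finset.sum_nonneg fun k _ => (hy k).1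
    rwa [abs_of_nonneg hx0, abs_of_nonneg hy0] at h1
  have hsq : ∑ k, (x k) ^ 2 = ∑ k, (y k) ^ 2 := by
    have h1 := odft_parsevalR hM hMpos (fun k => (x k : ℂ))
    have h2 := odft_parsevalR hM hMpos (fun k => (y k : ℂ))
    have h3 : ∑ n : Fin M, ‖odft M (fun k => (x k : ℂ)) n‖ ^ 2
        = ∑ n : Fin M, ‖odft M (fun k => (y k : ℂ)) n‖ ^ 2 :=
      Finset.sum_congr rfl fun n _ => by rw [h n]
    rw [h1, h2] at h3
    have hMne : (M : ℝ) ≠ 0 := Nat.cast_ne_zero.mpr hMpos.ne'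
    have h4 := mul_left_cancel₀ hMne h3
    simpa [Complex.norm_real, Real.norm_eq_abs, sq_abs] using h4
  have hx2 : ∑ k, (x k) ^ 2 = ∑ k, x k :=
    Finset.sum_congr rfl fun k _ => by rcases hx k with h' | h' <;> simp [h']
  have key : ∑ k, y k * (1 - y k) = 0 := by
    have he : ∀ k : Fin N, y k * (1 - y k) = y k - (y k) ^ 2 := fun k => by ring
    calc ∑ k, y k * (1 - y k) = ∑ k, (y k - (y k) ^ 2) :=
          Finset.sum_congr rfl fun k _ => he k
      _ = ∑ k, y k - ∑ k, (y k) ^ 2 := Finset.sum_sub_distrib _ _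
      _ = 0 := by rw [← hxsum, ← hsq, hx2, sub_self]
  have hbin : ∀ k, y k = 0 ∨ y k = 1 := by
    intro k
    have hterm : ∀ j ∈ Finset.univ, (0 : ℝ) ≤ y j * (1 - y j) := fun j _ =>
      mul_nonneg (hy j).1 (by linarith [(hy j).2])
    have h0 := (Finset.sum_eq_zero_iff_of_nonneg hterm).1 key k (Finset.mem_univ k)
    rcases mul_eq_zero.1 h0 with h' | h'
    · exact Or.inl h'
    · exact Or.inr (by linarith)
  refine ⟨hbin, ?_⟩
  have count : ∀ z : Fin N → ℝ, (∀ k, z k = 0 ∨ z k = 1) →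
      ∑ k, z k = ((Finset.univ.filter fun k => z k ≠ 0).card : ℝ) := by
    intro z hz
    rw [← Finset.sum_filter_ne_zero]
    rw [Finset.sum_congr rfl (fun k hk => ?_), Finset.sum_const, nsmul_eq_mul, mul_one]
    rcases hz k with h' | h'
    · exact absurd h' (Finset.mem_filter.1 hk).2
    · exact h'
  have hc : ((Finset.univ.filter fun k => y k ≠ 0).card : ℝ)
      = ((Finset.univ.filter fun k => x k ≠ 0).card : ℝ) := by
    rw [← count y hbin, ← count x hx, hxsum]
  exact_mod_cast hc
end

section
/- Let N and L be positive integers. Let x ∈ {0,1}^N be a binary vector and y ∈ ℝ^N with 0 ≤ y_k ≤ 1 for all k. If x and y have the same FROG trace, i.e. |∑_{k=0}^{N−1} x_k x_{(k+mL) mod N} e^{−2πikn/N}|² = |∑_{k=0}^{N−1} y_k y_{(k+mL) mod N} e^{−2πikn/N}|² for all n = 0,…,N−1 and m = 0,…,⌈N/L⌉−1, then y_k ∈ {0,1} for all k and ‖y‖₀ = ‖x‖₀. -/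
open scoped BigOperators
open Finset

lemma frog_orth {N : ℕ} [NeZero N] (k j : Fin N) :
    ∑ n : Fin N, Complex.exp (-2 * Real.pi * Complex.I * ((k : ℕ) : ℂ) * ((n : ℕ) : ℂ) / (N : ℂ)) *
      Complex.exp (2 * Real.pi * Complex.I * ((j : ℕ) : ℂ) * ((n : ℕ) : ℂ) / (N : ℂ))
      = if k = j then (N : ℂ) else 0 := by
  have hN0 : (N : ℂ) ≠ 0 := Nat.cast_ne_zero.mpr (NeZero.ne N)
  set d : ℤ := (j : ℤ) - (k : ℤ) with hd
  set μ : ℂ := Complex.exp (2 * Real.pi * Complex.I * (d : ℂ) / (N : ℂ)) with hμ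
  have hterm : ∀ n : Fin N,
      Complex.exp (-2 * Real.pi * Complex.I * ((k : ℕ) : ℂ) * ((n : ℕ) : ℂ) / (N : ℂ)) *
      Complex.exp (2 * Real.pi * Complex.I * ((j : ℕ) : ℂ) * ((n : ℕ) : ℂ) / (N : ℂ)) = μ ^ (n : ℕ) := by
    intro n
    rw [hμ, ← Complex.exp_add, ← Complex.exp_nat_mul]
    congr 1
    have : ((d : ℂ)) = ((j : ℕ) : ℂ) - ((k : ℕ) : ℂ) := by push_cast [hd]; ring
    rw [this]
    field_simp
    ring
  simp_rw [hterm]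
  rw [Fin.sum_univ_eq_sum_range (fun i => μ ^ i) N]
  by_cases hkj : k = j
  · subst hkj
    have : d = 0 := by omega
    simp [hμ, this]
  · have hdne : d ≠ 0 := by
      intro h0
      apply hkj
      have : (k : ℕ) = (j : ℕ) := by omega
      exact Fin.ext this
    have hμN : μ ^ N = 1 := by
      rw [hμ, ← Complex.exp_nat_mul]
      have : (N : ℂ) * (2 * Real.pi * Complex.I * (d : ℂ) / (N : ℂ)) = (d : ℂ) * (2 * Real.pi * Complex.I) := by
        field_simp
      rw [this, Complex.exp_int_mul_two_pi_mul_I]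
    have hμ1 : μ ≠ 1 := by
      intro h1
      rw [hμ, Complex.exp_eq_one_iff] at h1
      obtain ⟨m, hm⟩ := h1
      have hc : (2 * (Real.pi : ℂ) * Complex.I) ≠ 0 := by
        simp [Real.pi_ne_zero, Complex.I_ne_zero]
      have hdm : (d : ℂ) = (m : ℂ) * (N : ℂ) := by
        have h2 := congrArg (fun t => t * (N : ℂ)) hm
        simp only [div_mul_cancel₀ _ hN0] at h2
        apply mul_left_cancel₀ hc
        linear_combination h2
      have hdm' : d = m * (N : ℤ) := by exact_mod_cast hdm
      have h1 : (j : ℤ) < N := by exact_mod_cast j.isLt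
      have h2 : (k : ℤ) < N := by exact_mod_cast k.isLt
      have h3 : 0 ≤ (j : ℤ) := Int.natCast_nonneg _
      have h4 : 0 ≤ (k : ℤ) := Int.natCast_nonneg _
      have hNp : 0 < (N : ℤ) := by exact_mod_cast Nat.pos_of_ne_zero (NeZero.ne N)
      rcases lt_trichotomy m 0 with hm0 | hm0 | hm0
      · have : m ≤ -1 := by omega
        nlinarith
      · subst hm0; simp at hdm'; omega
      · have : 1 ≤ m := by omega
        nlinarith
    rw [if_neg hkj, geom_sum_eq hμ1, hμN]
    simp

lemma frog_parseval {N : ℕ} [NeZero N] (z : Fin N → ℝ) :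
    ∑ n : Fin N, (‖(∑ k : Fin N, ((z k : ℝ) : ℂ) *
        Complex.exp (-2 * Real.pi * Complex.I * ((k : ℕ) : ℂ) * ((n : ℕ) : ℂ) / (N : ℂ)))‖) ^ 2
      = N * ∑ k : Fin N, (z k) ^ 2 := by
  set S : Fin N → ℂ := fun n => ∑ k : Fin N, ((z k : ℝ) : ℂ) *
      Complex.exp (-2 * Real.pi * Complex.I * ((k : ℕ) : ℂ) * ((n : ℕ) : ℂ) / (N : ℂ)) with hS
  have hconj : ∀ n : Fin N, (starRingEnd ℂ) (S n) = ∑ j : Fin N, ((z j : ℝ) : ℂ) *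
      Complex.exp (2 * Real.pi * Complex.I * ((j : ℕ) : ℂ) * ((n : ℕ) : ℂ) / (N : ℂ)) := by
    intro n
    rw [hS]
    simp only [map_sum, map_mul, Complex.conj_ofReal, ← Complex.exp_conj]
    congr 1
    ext j
    congr 2
    simp only [map_div₀, map_mul, Complex.conj_I, map_neg, map_ofNat, Complex.conj_natCast,
      Complex.conj_ofReal]
    ring
  have key : ∑ n : Fin N, S n * (starRingEnd ℂ) (S n) = (N : ℂ) * ∑ k : Fin N, ((z k : ℝ) : ℂ) ^ 2 := by
    have expand : ∀ n : Fin N, S n * (starRingEnd ℂ) (S n) = ∑ k : Fin N, ∑ j : Fin N,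
        ((z k : ℝ) : ℂ) * ((z j : ℝ) : ℂ) *
        (Complex.exp (-2 * Real.pi * Complex.I * ((k : ℕ) : ℂ) * ((n : ℕ) : ℂ) / (N : ℂ)) *
         Complex.exp (2 * Real.pi * Complex.I * ((j : ℕ) : ℂ) * ((n : ℕ) : ℂ) / (N : ℂ))) := by
      intro n
      rw [hconj, hS, Finset.sum_mul_sum]
      apply Finset.sum_congr rfl; intro k _
      apply Finset.sum_congr rfl; intro j _
      ring
    simp_rw [expand]
    rw [Finset.sum_comm]
    have : ∀ k : Fin N, (∑ n : Fin N, ∑ j : Fin N,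
        ((z k : ℝ) : ℂ) * ((z j : ℝ) : ℂ) *
        (Complex.exp (-2 * Real.pi * Complex.I * ((k : ℕ) : ℂ) * ((n : ℕ) : ℂ) / (N : ℂ)) *
         Complex.exp (2 * Real.pi * Complex.I * ((j : ℕ) : ℂ) * ((n : ℕ) : ℂ) / (N : ℂ))))
        = ((z k : ℝ) : ℂ) ^ 2 * N := by
      intro k
      rw [Finset.sum_comm]
      have : ∀ j : Fin N, (∑ n : Fin N,
          ((z k : ℝ) : ℂ) * ((z j : ℝ) : ℂ) *
          (Complex.exp (-2 * Real.pi * Complex.I * ((k : ℕ) : ℂ) * ((n : ℕ) : ℂ) / (N : ℂ)) *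
           Complex.exp (2 * Real.pi * Complex.I * ((j : ℕ) : ℂ) * ((n : ℕ) : ℂ) / (N : ℂ))))
          = ((z k : ℝ) : ℂ) * ((z j : ℝ) : ℂ) * (if k = j then (N : ℂ) else 0) := by
        intro j
        rw [← Finset.mul_sum, frog_orth]
      simp_rw [this]
      simp only [mul_ite, mul_zero]
      rw [Finset.sum_ite_eq]
      simp only [Finset.mem_univ, if_true]
      ring
    simp_rw [this]
    rw [← Finset.sum_mul]
    ring
  have habs : ∀ n : Fin N, (‖S n‖ ^ 2 : ℂ) = S n * (starRingEnd ℂ) (S n) := by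
    intro n
    rw [Complex.mul_conj]
    norm_cast
    exact Complex.sq_norm _
  have : ((∑ n : Fin N, ‖S n‖ ^ 2 : ℝ) : ℂ) = ((N * ∑ k : Fin N, (z k) ^ 2 : ℝ) : ℂ) := by
    push_cast
    rw [← key]
    apply Finset.sum_congr rfl
    intro n _
    exact_mod_cast habs n
  exact Complex.ofReal_inj.mp this


lemma shiftIdx_zero {N : ℕ} [NeZero N] (k : Fin N) : shiftIdx k 0 = k := by
  apply Fin.ext
  simp [shiftIdx, Nat.mod_eq_of_lt k.isLt]

open scoped Classical in
/-- box relaxation for binary signals under the FROG trace. -/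
theorem box_to_binary_frog {N L : ℕ} [NeZero N] (hL : 0 < L) (x y : Fin N → ℝ)
    (hx : ∀ k, x k = 0 ∨ x k = 1) (hy : ∀ k, 0 ≤ y k ∧ y k ≤ 1)
    (h : ∀ m : ℕ, m < (N + L - 1) / L → ∀ n : Fin N,
      (‖(∑ k : Fin N, ((x k * x (shiftIdx k (m * L)) : ℝ) : ℂ) *
        Complex.exp (-2 * Real.pi * Complex.I * ((k : ℕ) : ℂ) * ((n : ℕ) : ℂ) / (N : ℂ)))‖) ^ 2 =
      (‖(∑ k : Fin N, ((y k * y (shiftIdx k (m * L)) : ℝ) : ℂ) *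
        Complex.exp (-2 * Real.pi * Complex.I * ((k : ℕ) : ℂ) * ((n : ℕ) : ℂ) / (N : ℂ)))‖) ^ 2) :
    (∀ k, y k = 0 ∨ y k = 1) ∧
    (Finset.univ.filter fun k => y k ≠ 0).card =
      (Finset.univ.filter fun k => x k ≠ 0).card := by
  have hNpos : 0 < N := Nat.pos_of_ne_zero (NeZero.ne N)
  have hlt : 0 < (N + L - 1) / L := Nat.div_pos (by omega) hL
  have h0 : ∀ n : Fin N,
      (‖(∑ k : Fin N, ((x k * x k : ℝ) : ℂ) *
        Complex.exp (-2 * Real.pi * Complex.I * ((k : ℕ) : ℂ) * ((n : ℕ) : ℂ) / (N : ℂ)))‖) ^ 2 =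
      (‖(∑ k : Fin N, ((y k * y k : ℝ) : ℂ) *
        Complex.exp (-2 * Real.pi * Complex.I * ((k : ℕ) : ℂ) * ((n : ℕ) : ℂ) / (N : ℂ)))‖) ^ 2 := by
    intro n
    have := h 0 hlt n
    simpa [shiftIdx_zero] using this
  have hsum4 : (N : ℝ) * ∑ k : Fin N, (x k * x k) ^ 2 = (N : ℝ) * ∑ k : Fin N, (y k * y k) ^ 2 := by
    rw [← frog_parseval (fun k => x k * x k), ← frog_parseval (fun k => y k * y k)]
    exact Finset.sum_congr rfl fun n _ => h0 n
  have h4 : ∑ k : Fin N, (x k) ^ 4 = ∑ k : Fin N, (y k) ^ 4 := by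
    have hNne : (N : ℝ) ≠ 0 := Nat.cast_ne_zero.mpr (NeZero.ne N)
    have hc := mul_left_cancel₀ hNne hsum4
    calc ∑ k : Fin N, (x k) ^ 4 = ∑ k : Fin N, (x k * x k) ^ 2 :=
            Finset.sum_congr rfl fun k _ => by ring
      _ = ∑ k : Fin N, (y k * y k) ^ 2 := hc
      _ = ∑ k : Fin N, (y k) ^ 4 := Finset.sum_congr rfl fun k _ => by ring
  have h2 : ∑ k : Fin N, (x k) ^ 2 = ∑ k : Fin N, (y k) ^ 2 := by
    have hn0 := h0 ⟨0, hNpos⟩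
    have habs : ∀ z : Fin N → ℝ,
        (‖(∑ k : Fin N, ((z k * z k : ℝ) : ℂ) *
          Complex.exp (-2 * Real.pi * Complex.I * ((k : ℕ) : ℂ) * (((⟨0, hNpos⟩ : Fin N) : ℕ) : ℂ) / (N : ℂ)))‖) ^ 2
        = (∑ k : Fin N, (z k) ^ 2) ^ 2 := by
      intro z
      have hterm : ∀ k : Fin N, ((z k * z k : ℝ) : ℂ) *
          Complex.exp (-2 * Real.pi * Complex.I * ((k : ℕ) : ℂ) * (((⟨0, hNpos⟩ : Fin N) : ℕ) : ℂ) / (N : ℂ))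
          = ((z k ^ 2 : ℝ) : ℂ) := by
        intro k
        norm_num [Complex.exp_zero, pow_two]
      rw [Finset.sum_congr rfl fun k _ => hterm k, ← Complex.ofReal_sum, Complex.norm_real, Real.norm_eq_abs,
        sq_abs]
    rw [habs x, habs y] at hn0
    have hx2 : 0 ≤ ∑ k : Fin N, (x k) ^ 2 := Finset.sum_nonneg fun k _ => sq_nonneg _
    have hy2 : 0 ≤ ∑ k : Fin N, (y k) ^ 2 := Finset.sum_nonneg fun k _ => sq_nonneg _
    nlinarith [hn0, hx2, hy2]
  have hxc : ∑ k : Fin N, (x k) ^ 2 = ∑ k : Fin N, (x k) ^ 4 :=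
    Finset.sum_congr rfl fun k _ => by rcases hx k with h' | h' <;> simp [h']
  have hyeq : ∑ k : Fin N, ((y k) ^ 2 - (y k) ^ 4) = 0 := by
    rw [Finset.sum_sub_distrib, ← h2, hxc, h4, sub_self]
  have hterm0 : ∀ k ∈ Finset.univ, (y k) ^ 2 - (y k) ^ 4 = 0 := by
    apply (Finset.sum_eq_zero_iff_of_nonneg ?_).mp hyeq
    intro k _
    have h1 := (hy k).1
    have h2' := (hy k).2
    have hsq : y k ^ 2 ≤ 1 := by nlinarith
    have := mul_nonneg (sq_nonneg (y k)) (sub_nonneg.mpr hsq)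
    nlinarith [this]
  have hbin : ∀ k, y k = 0 ∨ y k = 1 := by
    intro k
    have hk := hterm0 k (Finset.mem_univ k)
    have h1 := (hy k).1
    have h2' := (hy k).2
    have hfac : (y k) ^ 2 * ((1 - y k) * (1 + y k)) = 0 := by nlinarith
    rcases mul_eq_zero.mp hfac with hf | hf
    · left; exact pow_eq_zero_iff (by norm_num) |>.mp hf
    · rcases mul_eq_zero.mp hf with hf' | hf'
      · right; linarith
      · left; linarith
  refine ⟨hbin, ?_⟩
  have hcard : ∀ (z : Fin N → ℝ), (∀ k, z k = 0 ∨ z k = 1) →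
      (((Finset.univ.filter fun k => z k ≠ 0).card : ℝ)) = ∑ k : Fin N, (z k) ^ 2 := by
    intro z hz
    rw [Finset.card_filter]
    push_cast
    apply Finset.sum_congr rfl
    intro k _
    rcases hz k with h' | h' <;> simp [h']
  have : (((Finset.univ.filter fun k => y k ≠ 0).card : ℝ)) =
      (((Finset.univ.filter fun k => x k ≠ 0).card : ℝ)) := by
    rw [hcard y hbin, hcard x hx, h2]
  exact_mod_cast this
end
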